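/- arXiv:2512.09113 — 6 statements merged into one kernel-verified Lean document; each statement's English description precedes it below -/
import Mathlib

section
/- For every k ∈ (0,1) there exists a constant c > 0 (depending only on k and L) such that ‖∇V(u,y)‖² ≤ c V(u,y) for all (u,y) ∈ ℝⁿ × ℝⁿ, where ∇V denotes the gradient of V on ℝⁿ × ℝⁿ. -/
set_option maxHeartbeats 2000000

open scoped RealInnerProductSpace

noncomputable section

/-- ℝⁿ as a Euclidean space. -/
abbrev En (n : ℕ) := EuclideanSpace ℝ (Fin n)

/-- ℝⁿ × ℝⁿ with the Euclidean (L²) product structure. -/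
abbrev Hn (n : ℕ) := WithLp 2 (En n × En n)

/-- The Lyapunov function `V(u,y) = (1−k)(φ(u) − φ(u⋆)) + (k/2)‖y − ∇φ(u)‖²`,
viewed as a function on ℝⁿ × ℝⁿ. -/
noncomputable def V {n : ℕ} (φ : En n → ℝ) (ustar : En n) (k : ℝ) (p : Hn n) : ℝ :=
  (1 - k) * (φ p.ofLp.1 - φ ustar) + (k / 2) * ‖p.ofLp.2 - gradient φ p.ofLp.1‖ ^ 2

private lemma hn_norm_fst_le {n : ℕ} (v : Hn n) : ‖v.ofLp.1‖ ≤ ‖v‖ := by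
  have h : ‖v‖^2 = ‖v.ofLp.1‖^2 + ‖v.ofLp.2‖^2 := WithLp.prod_norm_sq_eq_of_L2 v
  have h2 : ‖v.ofLp.1‖^2 ≤ ‖v‖^2 := by nlinarith [sq_nonneg ‖v.ofLp.2‖]
  exact (pow_le_pow_iff_left₀ (norm_nonneg _) (norm_nonneg _) two_ne_zero).mp h2

private lemma hn_norm_snd_le {n : ℕ} (v : Hn n) : ‖v.ofLp.2‖ ≤ ‖v‖ := by
  have h : ‖v‖^2 = ‖v.ofLp.1‖^2 + ‖v.ofLp.2‖^2 := WithLp.prod_norm_sq_eq_of_L2 v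
  have h2 : ‖v.ofLp.2‖^2 ≤ ‖v‖^2 := by nlinarith [sq_nonneg ‖v.ofLp.1‖]
  exact (pow_le_pow_iff_left₀ (norm_nonneg _) (norm_nonneg _) two_ne_zero).mp h2

private lemma final_arith (μ L k A B W G : ℝ) (hμ : 0 < μ) (hL : 0 < L)
    (hk0 : 0 < k) (hk1 : k < 1) (hA : 0 ≤ A) (hB : 0 ≤ B) (hW : 0 ≤ W)
    (hG : 0 ≤ G) (hGM : G ≤ (1-k) * A + k * (1+L) * B)
    (hAW : A^2 ≤ (4*L^2/μ) * W) :
    G^2 ≤ (8*L^2/μ + 4*(1+L)^2) * ((1-k) * W + (k/2) * B^2) := by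
  set M := (1-k) * A + k * (1+L) * B with hM
  have hMnn : 0 ≤ M := by
    have h1 : 0 ≤ (1-k) * A := mul_nonneg (by linarith) hA
    have h2 : 0 ≤ k * (1+L) * B := by positivity
    linarith
  have h1 : G^2 ≤ M^2 := by nlinarith
  have h2 : M^2 ≤ 2*(1-k)^2*A^2 + 2*k^2*(1+L)^2*B^2 := by
    nlinarith [sq_nonneg ((1-k)*A - k*(1+L)*B)]
  have h3 : 2*(1-k)^2*A^2 ≤ (8*L^2/μ) * ((1-k) * W) := by
    have h3a : 2*(1-k)^2*A^2 ≤ 2*(1-k)*A^2 := by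
      nlinarith [mul_nonneg (mul_nonneg hk0.le (by linarith : (0:ℝ) ≤ 1-k)) (sq_nonneg A)]
    have h3b : 2*(1-k)*A^2 ≤ 2*(1-k)*((4*L^2/μ) * W) := by
      apply mul_le_mul_of_nonneg_left hAW; linarith
    calc 2*(1-k)^2*A^2 ≤ 2*(1-k)*((4*L^2/μ) * W) := le_trans h3a h3b
      _ = (8*L^2/μ) * ((1-k) * W) := by ring
  have h4 : 2*k^2*(1+L)^2*B^2 ≤ (4*(1+L)^2) * ((k/2) * B^2) := by
    nlinarith [mul_nonneg (mul_nonneg (mul_nonneg hk0.le (by linarith : (0:ℝ) ≤ 1-k))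
      (sq_nonneg (1+L))) (sq_nonneg B)]
  have h5 : (8*L^2/μ) * ((1-k) * W) + (4*(1+L)^2) * ((k/2) * B^2)
      ≤ (8*L^2/μ + 4*(1+L)^2) * ((1-k) * W + (k/2) * B^2) := by
    have e1 : (0:ℝ) ≤ (8*L^2/μ) * ((k/2) * B^2) := by positivity
    have e2 : (0:ℝ) ≤ (4*(1+L)^2) * ((1-k) * W) := by
      have : (0:ℝ) ≤ (1-k) * W := mul_nonneg (by linarith) hW
      positivity
    nlinarith
  linarith

/-- for every `k ∈ (0,1)` there exists `c > 0` such that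
`‖∇V(u,y)‖² ≤ c V(u,y)` for all `(u,y) ∈ ℝⁿ × ℝⁿ`. -/
theorem stmt1 (n : ℕ) (hn : 1 ≤ n) (μ L : ℝ) (hμ : 0 < μ) (hL : 0 < L)
    (φ : En n → ℝ) (hφ : ContDiff ℝ 2 φ)
    (hconv : StrongConvexOn Set.univ μ φ)
    (hlip : LipschitzWith L.toNNReal (gradient φ))
    (ustar : En n) (hmin : ∀ u, φ ustar ≤ φ u)
    (huniq : ∀ u, φ u = φ ustar → u = ustar)
    (hgrad0 : gradient φ ustar = 0)
    (k : ℝ) (hk : k ∈ Set.Ioo (0 : ℝ) 1) :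
    ∃ c > (0 : ℝ), ∀ p : Hn n,
      ‖gradient (V φ ustar k) p‖ ^ 2 ≤ c * V φ ustar k p := by
  obtain ⟨hk0, hk1⟩ := hk
  set g := gradient φ with hg_def
  have hgc : ContDiff ℝ 1 g := by
    have h1 : ContDiff ℝ 1 (fderiv ℝ φ) := hφ.fderiv_right (by norm_num)
    exact (InnerProductSpace.toDual ℝ (En n)).symm.contDiff.comp h1
  have hφdiff : Differentiable ℝ φ := hφ.differentiable (by norm_num)
  have hφd : ∀ u, HasFDerivAt φ (InnerProductSpace.toDual ℝ (En n) (g u)) u := by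
    intro u
    have : InnerProductSpace.toDual ℝ (En n) (g u) = fderiv ℝ φ u := by
      simp [hg_def, gradient]
    rw [this]
    exact (hφdiff u).hasFDerivAt
  have hgd : ∀ u, HasFDerivAt g (fderiv ℝ g u) u := fun u =>
    ((hgc.differentiable one_ne_zero) u).hasFDerivAt
  have hHnorm : ∀ u, ‖fderiv ℝ g u‖ ≤ L := by
    intro u
    have := norm_fderiv_le_of_lipschitz ℝ (x₀ := u) hlip
    rwa [Real.coe_toNNReal L hL.le] at this
  set F1 : Hn n →L[ℝ] En n :=
    (ContinuousLinearMap.fst ℝ (En n) (En n)).comp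
      (WithLp.prodContinuousLinearEquiv 2 ℝ (En n) (En n)).toContinuousLinearMap with hF1
  set F2 : Hn n →L[ℝ] En n :=
    (ContinuousLinearMap.snd ℝ (En n) (En n)).comp
      (WithLp.prodContinuousLinearEquiv 2 ℝ (En n) (En n)).toContinuousLinearMap with hF2
  have hF1app : ∀ v : Hn n, F1 v = v.ofLp.1 := fun v => rfl
  have hF2app : ∀ v : Hn n, F2 v = v.ofLp.2 := fun v => rfl
  have hsc : ∀ u, (μ/4) * ‖u - ustar‖^2 ≤ φ u - φ ustar := by
    intro u
    have h := hconv.2 (Set.mem_univ u) (Set.mem_univ ustar)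
      (by norm_num : (0:ℝ) ≤ 1/2) (by norm_num : (0:ℝ) ≤ 1/2) (by norm_num)
    have hmid : φ ustar ≤ φ ((1/2 : ℝ) • u + (1/2 : ℝ) • ustar) := hmin _
    simp only [smul_eq_mul] at h
    nlinarith [h, hmid]
  have hA : ∀ u, ‖g u‖ ≤ L * ‖u - ustar‖ := by
    intro u
    have := hlip.dist_le_mul u ustar
    rw [Real.coe_toNNReal L hL.le] at this
    simpa [dist_eq_norm, hgrad0] using this
  refine ⟨8*L^2/μ + 4*(1+L)^2, by positivity, ?_⟩
  intro p
  set z : En n := p.ofLp.2 - g p.ofLp.1 with hz_def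
  set Z : Hn n →L[ℝ] En n := F2 - (fderiv ℝ g p.ofLp.1).comp F1 with hZ
  set D : Hn n →L[ℝ] ℝ :=
    (1-k) • ((InnerProductSpace.toDual ℝ (En n) (g p.ofLp.1)).comp F1) +
    (k/2) • ((fderivInnerCLM ℝ (z, z)).comp (Z.prod Z)) with hD
  have hzd : HasFDerivAt (fun q : Hn n => q.ofLp.2 - g q.ofLp.1) Z p := by
    have h2 : HasFDerivAt (fun q : Hn n => g q.ofLp.1) ((fderiv ℝ g p.ofLp.1).comp F1) p :=
      by have := (hgd p.ofLp.1).comp p F1.hasFDerivAt; exact this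
    exact F2.hasFDerivAt.sub h2
  have hVeq : V φ ustar k = fun q : Hn n =>
      (1-k) * (φ q.ofLp.1 - φ ustar) + (k/2) * ⟪q.ofLp.2 - g q.ofLp.1, q.ofLp.2 - g q.ofLp.1⟫ := by
    funext q
    rw [V, real_inner_self_eq_norm_sq]
  have hVd : HasFDerivAt (V φ ustar k) D p := by
    rw [hVeq]
    have h1 : HasFDerivAt (fun q : Hn n => φ q.ofLp.1)
        ((InnerProductSpace.toDual ℝ (En n) (g p.ofLp.1)).comp F1) p :=
      (hφd p.ofLp.1).comp p F1.hasFDerivAt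
    exact ((h1.sub_const (φ ustar)).const_mul (1-k)).add ((hzd.inner ℝ hzd).const_mul (k/2))
  have hgradV : ‖gradient (V φ ustar k) p‖ = ‖D‖ := by
    set_option synthInstance.maxHeartbeats 400000 in
    rw [gradient, hVd.fderiv, LinearIsometryEquiv.norm_map]
  have hDapp : ∀ v : Hn n, D v = (1-k) * ⟪g p.ofLp.1, v.ofLp.1⟫ + k * ⟪z, Z v⟫ := by
    intro v
    simp only [hD, ContinuousLinearMap.add_apply, ContinuousLinearMap.smul_apply,
      ContinuousLinearMap.comp_apply, ContinuousLinearMap.prod_apply,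
      fderivInnerCLM_apply, InnerProductSpace.toDual_apply_apply, hF1app, smul_eq_mul]
    rw [real_inner_comm (Z v) z]
    ring
  have hMnn : (0:ℝ) ≤ (1-k) * ‖g p.ofLp.1‖ + k * (1+L) * ‖z‖ := by
    have h1 : (0:ℝ) ≤ (1-k) * ‖g p.ofLp.1‖ := mul_nonneg (by linarith) (norm_nonneg _)
    have h2 : (0:ℝ) ≤ k * (1+L) * ‖z‖ := by positivity
    linarith
  have hbound : ∀ v : Hn n, ‖D v‖ ≤ ((1-k) * ‖g p.ofLp.1‖ + k * (1+L) * ‖z‖) * ‖v‖ := by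
    intro v
    have hZv : ‖Z v‖ ≤ (1+L) * ‖v‖ := by
      have h0 : ‖Z v‖ ≤ ‖v.ofLp.2‖ + ‖fderiv ℝ g p.ofLp.1‖ * ‖v.ofLp.1‖ := by
        have he : Z v = v.ofLp.2 - (fderiv ℝ g p.ofLp.1) v.ofLp.1 := rfl
        rw [he]
        exact (norm_sub_le _ _).trans
          (add_le_add le_rfl ((fderiv ℝ g p.ofLp.1).le_opNorm v.ofLp.1))
      have h1 : ‖fderiv ℝ g p.ofLp.1‖ * ‖v.ofLp.1‖ ≤ L * ‖v‖ := by
        calc ‖fderiv ℝ g p.ofLp.1‖ * ‖v.ofLp.1‖ ≤ L * ‖v.ofLp.1‖ :=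
              mul_le_mul_of_nonneg_right (hHnorm p.ofLp.1) (norm_nonneg _)
          _ ≤ L * ‖v‖ := mul_le_mul_of_nonneg_left (hn_norm_fst_le v) hL.le
      calc ‖Z v‖ ≤ ‖v.ofLp.2‖ + ‖fderiv ℝ g p.ofLp.1‖ * ‖v.ofLp.1‖ := h0
        _ ≤ ‖v‖ + L * ‖v‖ := add_le_add (hn_norm_snd_le v) h1
        _ = (1+L) * ‖v‖ := by ring
    rw [hDapp v, Real.norm_eq_abs]
    calc |(1-k) * ⟪g p.ofLp.1, v.ofLp.1⟫ + k * ⟪z, Z v⟫|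
        ≤ (1-k) * |⟪g p.ofLp.1, v.ofLp.1⟫| + k * |⟪z, Z v⟫| := by
          refine (abs_add_le _ _).trans ?_
          rw [abs_mul, abs_mul, abs_of_nonneg (by linarith : (0:ℝ) ≤ 1-k),
            abs_of_nonneg hk0.le]
      _ ≤ (1-k) * (‖g p.ofLp.1‖ * ‖v.ofLp.1‖) + k * (‖z‖ * ‖Z v‖) := by
          gcongr
          · exact abs_real_inner_le_norm _ _
          · exact abs_real_inner_le_norm _ _
      _ ≤ (1-k) * (‖g p.ofLp.1‖ * ‖v‖) + k * (‖z‖ * ((1+L) * ‖v‖)) := by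
          gcongr
          · exact hn_norm_fst_le v
      _ = ((1-k) * ‖g p.ofLp.1‖ + k * (1+L) * ‖z‖) * ‖v‖ := by ring
  have hDnorm : ‖D‖ ≤ (1-k) * ‖g p.ofLp.1‖ + k * (1+L) * ‖z‖ :=
    D.opNorm_le_bound hMnn hbound
  have hA2 : ‖g p.ofLp.1‖^2 ≤ (4*L^2/μ) * (φ p.ofLp.1 - φ ustar) := by
    have h1 := hA p.ofLp.1
    have h2 := hsc p.ofLp.1
    have h3 : ‖g p.ofLp.1‖^2 ≤ L^2 * ‖p.ofLp.1 - ustar‖^2 := by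
      nlinarith [norm_nonneg (g p.ofLp.1), norm_nonneg (p.ofLp.1 - ustar)]
    rw [div_mul_eq_mul_div, le_div_iff₀ hμ]
    nlinarith
  have hφpos : 0 ≤ φ p.ofLp.1 - φ ustar := by linarith [hmin p.ofLp.1]
  have key := final_arith μ L k (‖g p.ofLp.1‖) (‖z‖) (φ p.ofLp.1 - φ ustar) ‖D‖ hμ hL hk0 hk1
    (norm_nonneg _) (norm_nonneg _) hφpos (norm_nonneg _) hDnorm hA2
  rw [hgradV]
  show ‖D‖^2 ≤ _ * ((1 - k) * (φ p.ofLp.1 - φ ustar) + (k / 2) * ‖p.ofLp.2 - g p.ofLp.1‖ ^ 2)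
  rw [← hz_def]
  exact key

end
end

section
/- There exists k* ∈ (0,1), depending only on μ and L, such that for every k ∈ (0,k*) there exist constants β₁, β₂ > 0 satisfying ⟨∇V(u,y), f((u,y),(e_u,e_y))⟩ ≤ −β₁ V(u,y) + β₂² ‖(e_u,e_y)‖² for all (u,y) ∈ ℝⁿ × ℝⁿ and all (e_u,e_y) ∈ ℝⁿ × ℝⁿ. -/
open scoped RealInnerProductSpace

noncomputable section

/-- The flow map `f((u,y),(e_u,e_y)) = (−k(y − e_y), ∇φ(u − e_u) − y)`. -/
noncomputable def fmap {n : ℕ} (φ : En n → ℝ) (k : ℝ) (x e : Hn n) : Hn n :=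
  (WithLp.equiv 2 (En n × En n)).symm
    ((-k) • (x.ofLp.2 - e.ofLp.2), gradient φ (x.ofLp.1 - e.ofLp.1) - x.ofLp.2)

/-! ### Auxiliary lemmas -/

lemma inner_grad' {F : Type*} [NormedAddCommGroup F] [InnerProductSpace ℝ F] [CompleteSpace F]
    (f : F → ℝ) (x w : F) : ⟪gradient f x, w⟫ = fderiv ℝ f x w := by
  show ⟪(InnerProductSpace.toDual ℝ F).symm (fderiv ℝ f x), w⟫ = _
  rw [InnerProductSpace.toDual_symm_apply]

/-- First-order inequality for strongly convex differentiable functions. -/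
lemma sgrad' {n : ℕ} (μ : ℝ) (φ : En n → ℝ) (hφ : ContDiff ℝ 2 φ)
    (hconv : StrongConvexOn Set.univ μ φ) (u v : En n) :
    φ u - φ v ≤ ‖gradient φ u‖ * ‖v - u‖ - μ / 2 * ‖v - u‖ ^ 2 := by
  set d := v - u with hd
  set g := gradient φ u with hg
  have hder : HasDerivAt (fun t : ℝ => φ (u + t • d)) (⟪g, d⟫) 0 := by
    have hfd : HasFDerivAt φ (fderiv ℝ φ u) (u + (0 : ℝ) • d) := by
      simpa using ((hφ.differentiable (by norm_num)) u).hasFDerivAt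
    have hc : HasDerivAt (fun t : ℝ => u + t • d) d 0 := by
      simpa using ((hasDerivAt_id (0 : ℝ)).smul_const d).const_add u
    have h2 := hfd.comp_hasDerivAt (0 : ℝ) hc
    have h3 : ⟪g, d⟫ = fderiv ℝ φ u d := inner_grad' φ u d
    rw [h3]
    exact h2
  have hslope : Filter.Tendsto (fun t : ℝ => t⁻¹ * (φ (u + t • d) - φ u))
      (nhdsWithin 0 (Set.Ioi 0)) (nhds ⟪g, d⟫) := by
    have h0 := hasDerivAt_iff_tendsto_slope_zero.1 hder
    have h1 := h0.mono_left (nhdsWithin_mono (0:ℝ)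
      (fun t (ht : t ∈ Set.Ioi (0:ℝ)) => (ne_of_gt ht : t ≠ 0)))
    simpa [smul_eq_mul] using h1
  have hts : Filter.Tendsto (fun t : ℝ => φ v - φ u - (1 - t) * (μ / 2 * ‖d‖ ^ 2))
      (nhdsWithin 0 (Set.Ioi 0)) (nhds (φ v - φ u - μ / 2 * ‖d‖ ^ 2)) := by
    have hc : Continuous fun t : ℝ => φ v - φ u - (1 - t) * (μ / 2 * ‖d‖ ^ 2) := by continuity
    have := (hc.tendsto 0).mono_left (nhdsWithin_le_nhds (s := Set.Ioi (0:ℝ)))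
    simpa using this
  have key : ⟪g, d⟫ ≤ φ v - φ u - μ / 2 * ‖d‖ ^ 2 := by
    refine le_of_tendsto_of_tendsto hslope hts ?_
    have hmem : Set.Ioo (0:ℝ) 1 ∈ nhdsWithin (0:ℝ) (Set.Ioi 0) :=
      Ioo_mem_nhdsGT_of_mem (by simp : (0:ℝ) ∈ Set.Ico (0:ℝ) 1)
    filter_upwards [hmem] with t ht
    obtain ⟨ht0, ht1⟩ := ht
    have hcv := hconv.2 (Set.mem_univ u) (Set.mem_univ v)
      (by linarith : (0:ℝ) ≤ 1 - t) ht0.le (by ring)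
    have heq : (1 - t) • u + t • v = u + t • d := by
      rw [hd]; module
    have hnorm : ‖u - v‖ = ‖d‖ := by rw [hd, norm_sub_rev]
    rw [heq, hnorm] at hcv
    simp only [smul_eq_mul] at hcv ⊢
    rw [inv_mul_le_iff₀ ht0]
    nlinarith [norm_nonneg d]
  have hCS : -(‖g‖ * ‖d‖) ≤ ⟪g, d⟫ := by
    have := abs_real_inner_le_norm g d
    cases' abs_le.1 this with h1 h2
    linarith
  nlinarith [norm_nonneg d, norm_nonneg g]

lemma grad_diff' {n : ℕ} (φ : En n → ℝ) (hφ : ContDiff ℝ 2 φ) (u : En n) :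
    DifferentiableAt ℝ (gradient φ) u := by
  have hfd2 : ContDiff ℝ 1 (fderiv ℝ φ) := hφ.fderiv_right (by norm_num)
  have heq : gradient φ = fun w => (InnerProductSpace.toDual ℝ (En n)).symm (fderiv ℝ φ w) := rfl
  rw [heq]
  exact ((InnerProductSpace.toDual ℝ (En n)).symm.toContinuousLinearEquiv.differentiable.comp
    (hfd2.differentiable (by norm_num))).differentiableAt

set_option maxHeartbeats 1000000 in
set_option synthInstance.maxHeartbeats 400000 in
/-- The derivative of the Lyapunov function `V`. -/
lemma fderiv_V' {n : ℕ} (φ : En n → ℝ) (hφ : ContDiff ℝ 2 φ) (ustar : En n) (k : ℝ)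
    (x w : Hn n) :
    ⟪gradient (V φ ustar k) x, w⟫ =
      (1 - k) * ⟪gradient φ x.ofLp.1, w.ofLp.1⟫ +
        k * ⟪x.ofLp.2 - gradient φ x.ofLp.1, w.ofLp.2 - fderiv ℝ (gradient φ) x.ofLp.1 w.ofLp.1⟫ := by
  classical
  set eL : Hn n →L[ℝ] (En n × En n) :=
    (WithLp.prodContinuousLinearEquiv 2 ℝ (En n) (En n) :
      Hn n ≃L[ℝ] En n × En n).toContinuousLinearMap with heL
  set fstL : Hn n →L[ℝ] En n := (ContinuousLinearMap.fst ℝ (En n) (En n)).comp eL with hfstL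
  set sndL : Hn n →L[ℝ] En n := (ContinuousLinearMap.snd ℝ (En n) (En n)).comp eL with hsndL
  have h1 : HasFDerivAt (fun p : Hn n => p.ofLp.1) fstL x := fstL.hasFDerivAt
  have h2 : HasFDerivAt (fun p : Hn n => p.ofLp.2) sndL x := sndL.hasFDerivAt
  have hφd : HasFDerivAt φ (fderiv ℝ φ x.ofLp.1) x.ofLp.1 :=
    ((hφ.differentiable (by norm_num)) x.ofLp.1).hasFDerivAt
  set Hm : En n →L[ℝ] En n := fderiv ℝ (gradient φ) x.ofLp.1 with hHm
  have hgd : HasFDerivAt (gradient φ) Hm x.ofLp.1 := (grad_diff' φ hφ x.ofLp.1).hasFDerivAt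
  have hA : HasFDerivAt (fun p : Hn n => φ p.ofLp.1) ((fderiv ℝ φ x.ofLp.1).comp fstL) x :=
    hφd.comp x h1
  have hB : HasFDerivAt (fun p : Hn n => p.ofLp.2 - gradient φ p.ofLp.1)
      (sndL - Hm.comp fstL) x := h2.sub (by exact hgd.comp x h1)
  have hC : HasFDerivAt (fun p : Hn n => ‖p.ofLp.2 - gradient φ p.ofLp.1‖ ^ 2)
      (2 • (innerSL ℝ (x.ofLp.2 - gradient φ x.ofLp.1)).comp (sndL - Hm.comp fstL)) x := hB.norm_sq
  have hV : HasFDerivAt (V φ ustar k)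
      ((1 - k) • ((fderiv ℝ φ x.ofLp.1).comp fstL) +
        (k / 2) • (2 • (innerSL ℝ (x.ofLp.2 - gradient φ x.ofLp.1)).comp (sndL - Hm.comp fstL))) x := by
    exact ((hA.sub_const (φ ustar)).const_mul (1 - k)).add (hC.const_mul (k / 2))
  rw [inner_grad', hV.fderiv]
  have hfst : ∀ w : Hn n, fstL w = w.ofLp.1 := fun _ => rfl
  have hsnd : ∀ w : Hn n, sndL w = w.ofLp.2 := fun _ => rfl
  simp only [ContinuousLinearMap.add_apply, ContinuousLinearMap.coe_smul', Pi.smul_apply,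
    ContinuousLinearMap.comp_apply, ContinuousLinearMap.sub_apply, smul_eq_mul,
    ContinuousLinearMap.smul_apply, innerSL_apply_apply, hfst, hsnd, two_smul]
  rw [← inner_grad' φ x.ofLp.1 w.ofLp.1]
  ring

lemma pl_scalar' (μ G P dd : ℝ) (hμ : 0 < μ) (h : P ≤ G * dd - μ/2 * dd^2) :
    2*μ*P ≤ G^2 := by
  nlinarith [sq_nonneg (G - μ * dd), mul_le_mul_of_nonneg_right h (by positivity : (0:ℝ) ≤ 2*μ)]

set_option maxHeartbeats 1000000 in
/-- The purely scalar part of the Lyapunov estimate. -/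
lemma keyineq' (μ L k C G R E P Igz Irδ IrH Vv : ℝ)
    (hμ : 0 < μ) (hL : 0 < L) (hk0 : 0 < k) (hk4 : k ≤ 1/4) (hkL : k*L ≤ 1/4)
    (hC : C = 1/(2*μ) + 1)
    (hGn : 0 ≤ G) (hRn : 0 ≤ R) (hEn : 0 ≤ E)
    (hlow : G^2 - G*R - G*E ≤ Igz)
    (hIrδ : Irδ ≤ R*(L*E))
    (hIrH : IrH ≤ R*(L*(R+G+E)))
    (hP : 0 ≤ P) (hPL : 2*μ*P ≤ G^2)
    (hVv : Vv = (1-k)*P + (k/2)*R^2) :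
    (1-k)*(-k*Igz) + k*(Irδ - R^2 + k*IrH) ≤ -(k/(16*C)) * Vv + (3*(L+1))^2 * E^2 := by
  have hk1 : k < 1 := by linarith
  have hC0 : 0 < C := by rw [hC]; positivity
  have c1 : 0 ≤ k*(1-k) := mul_nonneg hk0.le (by linarith)
  have big1 : -(k*(1-k)) * Igz ≤ -(k*(1-k))*G^2 + (k*(1-k))*(G*R) + (k*(1-k))*(G*E) := by
    nlinarith [mul_le_mul_of_nonneg_left hlow c1]
  have big2 : k^2 * IrH ≤ k^2 * (R * (L * (R + G + E))) :=
    mul_le_mul_of_nonneg_left hIrH (sq_nonneg k)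
  have big3 : k * Irδ ≤ k * (R * (L * E)) := mul_le_mul_of_nonneg_left hIrδ hk0.le
  have quad : -(k*(1-k))*G^2 + (k*(1-k))*(G*R) - k*R^2 + k^2 * (L*R^2) + k^2*(L*R*G)
      ≤ -(k/8)*(G^2 + R^2) := by
    nlinarith [mul_nonneg hk0.le (sq_nonneg (G - R)), mul_nonneg (mul_nonneg hk0.le hGn) hRn,
      mul_nonneg (mul_nonneg (mul_nonneg hk0.le hk0.le) hGn) hRn,
      mul_nonneg (mul_nonneg hk0.le hGn) hGn, mul_nonneg (mul_nonneg hk0.le hRn) hRn,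
      mul_nonneg (mul_nonneg (sub_nonneg.2 hkL) hGn) hRn,
      mul_nonneg (mul_nonneg (sub_nonneg.2 hkL) hRn) hRn,
      mul_nonneg (mul_nonneg (sub_nonneg.2 hk4) hGn) hGn,
      mul_nonneg (mul_nonneg (sub_nonneg.2 hk4) hGn) hRn]
  have err : (k*(1-k))*(G*E) + k*(R*(L*E)) + k^2*(L*R*E)
      ≤ (k/16)*(G^2 + R^2) + 8*(L+1)^2*E^2 := by
    have y1 : k*((L+1)*G*E) ≤ k*(G^2/16 + 4*(L+1)^2*E^2) := by
      apply mul_le_mul_of_nonneg_left _ hk0.le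
      linarith [sq_nonneg (G/4 - 2*(L+1)*E)]
    have y2 : k*((L+1)*R*E) ≤ k*(R^2/16 + 4*(L+1)^2*E^2) := by
      apply mul_le_mul_of_nonneg_left _ hk0.le
      linarith [sq_nonneg (R/4 - 2*(L+1)*E)]
    have h8 : 8*k*(L+1)^2*E^2 ≤ 8*(L+1)^2*E^2 := by
      nlinarith [mul_nonneg (mul_nonneg (sq_nonneg (L+1)) (sq_nonneg E))
        (by linarith : (0:ℝ) ≤ 1-k)]
    nlinarith [mul_nonneg (mul_nonneg hk0.le hGn) hEn,
      mul_nonneg (mul_nonneg (mul_nonneg hk0.le hk0.le) hGn) hEn,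
      mul_nonneg (mul_nonneg (mul_nonneg hk0.le hL.le) hRn) hEn,
      mul_nonneg (mul_nonneg (mul_nonneg (mul_nonneg hk0.le
        (by linarith : (0:ℝ) ≤ 1/4 - k)) hL.le) hRn) hEn,
      mul_nonneg (mul_nonneg hk0.le hRn) hEn]
  have hVle : Vv ≤ C * (G^2 + R^2) := by
    have hCμ : C * (2*μ) = 1 + 2*μ := by rw [hC]; field_simp
    have e1 : (2*μ)*(C*(G^2+R^2)) = (1+2*μ)*(G^2+R^2) := by linear_combination (G^2+R^2) * hCμ
    have key2 : (2*μ) * ((1-k)*P + (k/2)*R^2) ≤ (1+2*μ)*(G^2+R^2) := by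
      nlinarith [hPL, mul_nonneg (mul_nonneg hμ.le hk0.le) hP,
        mul_nonneg (mul_nonneg hμ.le (by linarith : (0:ℝ) ≤ 2-k)) (sq_nonneg R),
        sq_nonneg G, sq_nonneg R, mul_nonneg hμ.le (sq_nonneg G), mul_nonneg hμ.le (sq_nonneg R)]
    rw [hVv]
    exact le_of_mul_le_mul_left (by linarith [key2, e1]) (by positivity : (0:ℝ) < 2*μ)
  have hbeta : (k/(16*C)) * Vv ≤ (k/16)*(G^2+R^2) := by
    have h1 : (k/(16*C)) * Vv ≤ (k/(16*C)) * (C * (G^2+R^2)) :=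
      mul_le_mul_of_nonneg_left hVle (by positivity)
    have h2 : (k/(16*C)) * (C * (G^2+R^2)) = (k/16)*(G^2+R^2) := by
      field_simp
    linarith
  have hb2 : 8*(L+1)^2*E^2 ≤ (3*(L+1))^2 * E^2 := by
    nlinarith [mul_nonneg (sq_nonneg (L+1)) (sq_nonneg E)]
  have main : (1-k)*(-k*Igz) + k*(Irδ - R^2 + k*IrH)
      ≤ -(k/16)*(G^2+R^2) + 8*(L+1)^2*E^2 := by
    nlinarith [big1, big2, big3, quad, err]
  linarith [main, hbeta, hb2]

set_option maxHeartbeats 1000000 in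
/-- there exists `k* ∈ (0,1)` such that for every `k ∈ (0,k*)` there exist
`β₁, β₂ > 0` with `⟨∇V(u,y), f((u,y),(e_u,e_y))⟩ ≤ −β₁ V(u,y) + β₂² ‖(e_u,e_y)‖²`
for all `(u,y)` and `(e_u,e_y)` in ℝⁿ × ℝⁿ. -/
theorem stmt2 (n : ℕ) (hn : 1 ≤ n) (μ L : ℝ) (hμ : 0 < μ) (hL : 0 < L)
    (φ : En n → ℝ) (hφ : ContDiff ℝ 2 φ)
    (hconv : StrongConvexOn Set.univ μ φ)
    (hlip : LipschitzWith L.toNNReal (gradient φ))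
    (ustar : En n) (hmin : ∀ u, φ ustar ≤ φ u)
    (huniq : ∀ u, φ u = φ ustar → u = ustar)
    (hgrad0 : gradient φ ustar = 0) :
    ∃ kstar ∈ Set.Ioo (0 : ℝ) 1, ∀ k ∈ Set.Ioo (0 : ℝ) kstar,
      ∃ β₁ > (0 : ℝ), ∃ β₂ > (0 : ℝ), ∀ x e : Hn n,
        ⟪gradient (V φ ustar k) x, fmap φ k x e⟫ ≤ -β₁ * V φ ustar k x + β₂ ^ 2 * ‖e‖ ^ 2 := by
  have hL4 : (0:ℝ) < 1 / (4 * L) := by positivity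
  refine ⟨min (1/4) (1/(4*L)), ⟨lt_min (by norm_num) hL4,
    lt_of_le_of_lt (min_le_left _ _) (by norm_num)⟩, ?_⟩
  intro k hk
  obtain ⟨hk0, hkub⟩ := hk
  have hk4 : k ≤ 1/4 := le_of_lt (lt_of_lt_of_le hkub (min_le_left _ _))
  have hkL : k * L ≤ 1/4 := by
    have h := lt_of_lt_of_le hkub (min_le_right _ _)
    rw [lt_div_iff₀ (by positivity)] at h
    linarith
  have hk1 : k < 1 := by linarith
  set C : ℝ := 1/(2*μ) + 1 with hC
  have hC0 : 0 < C := by positivity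
  refine ⟨k / (16*C), by positivity, 3*(L+1), by positivity, ?_⟩
  intro x e
  rw [fderiv_V' φ hφ ustar k]
  have hf1 : (fmap φ k x e).ofLp.1 = (-k) • (x.ofLp.2 - e.ofLp.2) := rfl
  have hf2 : (fmap φ k x e).ofLp.2 = gradient φ (x.ofLp.1 - e.ofLp.1) - x.ofLp.2 := rfl
  rw [hf1, hf2]
  set g : En n := gradient φ x.ofLp.1 with hgdef
  set r : En n := x.ofLp.2 - g with hrdef
  set δ : En n := gradient φ (x.ofLp.1 - e.ofLp.1) - g with hδdef
  set z : En n := x.ofLp.2 - e.ofLp.2 with hzdef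
  set Hm : En n →L[ℝ] En n := fderiv ℝ (gradient φ) x.ofLp.1 with hHmdef
  set G : ℝ := ‖g‖ with hG
  set R : ℝ := ‖r‖ with hR
  set E : ℝ := ‖e‖ with hE
  have hGn : 0 ≤ G := norm_nonneg _
  have hRn : 0 ≤ R := norm_nonneg _
  have hEn : 0 ≤ E := norm_nonneg _
  have hgg : ⟪g, g⟫ = G^2 := real_inner_self_eq_norm_sq g
  have hrr : ⟪r, r⟫ = R^2 := real_inner_self_eq_norm_sq r
  have e1 : ⟪g, (-k) • z⟫ = -k * ⟪g, z⟫ := real_inner_smul_right g z (-k)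
  have e3 : ⟪g, z⟫ = ⟪g, r⟫ + ⟪g, g⟫ - ⟪g, e.ofLp.2⟫ := by
    have hzeq : z = r + g - e.ofLp.2 := by rw [hzdef, hrdef]; abel
    rw [hzeq, inner_sub_right, inner_add_right]
  have e2 : ⟪r, (gradient φ (x.ofLp.1 - e.ofLp.1) - x.ofLp.2) - Hm ((-k) • z)⟫
      = ⟪r, δ⟫ - ⟪r, r⟫ + k * ⟪r, Hm z⟫ := by
    have hw : (gradient φ (x.ofLp.1 - e.ofLp.1) - x.ofLp.2) - Hm ((-k) • z) = (δ - r) + k • (Hm z) := by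
      rw [map_smul]
      rw [hδdef, hrdef]
      module
    rw [hw, inner_add_right, inner_sub_right, real_inner_smul_right]
  rw [e1, e2, hrr]
  have hGr : -(G*R) ≤ ⟪g, r⟫ := by
    have := abs_real_inner_le_norm g r
    cases' abs_le.1 this with h1 _
    linarith
  have hE1 : ‖e.ofLp.1‖ ≤ E := by
    have h : ‖e‖^2 = ‖e.ofLp.1‖^2 + ‖e.ofLp.2‖^2 := WithLp.prod_norm_sq_eq_of_L2 e
    nlinarith [norm_nonneg e.ofLp.1, norm_nonneg e.ofLp.2, norm_nonneg e]
  have hE2 : ‖e.ofLp.2‖ ≤ E := by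
    have h : ‖e‖^2 = ‖e.ofLp.1‖^2 + ‖e.ofLp.2‖^2 := WithLp.prod_norm_sq_eq_of_L2 e
    nlinarith [norm_nonneg e.ofLp.1, norm_nonneg e.ofLp.2, norm_nonneg e]
  have hge : ⟪g, e.ofLp.2⟫ ≤ G * E := by
    calc ⟪g, e.ofLp.2⟫ ≤ ‖g‖ * ‖e.ofLp.2‖ := real_inner_le_norm g e.ofLp.2
    _ ≤ G * E := by apply mul_le_mul_of_nonneg_left hE2 hGn
  have hlow : G^2 - G*R - G*E ≤ ⟪g, z⟫ := by
    rw [e3, hgg]; linarith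
  have hHnorm : ‖Hm‖ ≤ L := by
    have := norm_fderiv_le_of_lipschitz ℝ hlip (x₀ := x.ofLp.1)
    rwa [Real.coe_toNNReal _ hL.le] at this
  have hδn : ‖δ‖ ≤ L * E := by
    have h1 : ‖δ‖ ≤ L * ‖e.ofLp.1‖ := by
      have := hlip.dist_le_mul (x.ofLp.1 - e.ofLp.1) x.ofLp.1
      rw [dist_eq_norm, dist_eq_norm, Real.coe_toNNReal _ hL.le] at this
      have h2 : x.ofLp.1 - e.ofLp.1 - x.ofLp.1 = -e.ofLp.1 := by abel
      rw [h2, norm_neg] at this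
      have h3 : δ = gradient φ (x.ofLp.1 - e.ofLp.1) - gradient φ x.ofLp.1 := rfl
      rw [h3]; exact this
    calc ‖δ‖ ≤ L * ‖e.ofLp.1‖ := h1
    _ ≤ L * E := mul_le_mul_of_nonneg_left hE1 hL.le
  have hrδ : ⟪r, δ⟫ ≤ R * (L * E) := by
    calc ⟪r, δ⟫ ≤ ‖r‖ * ‖δ‖ := real_inner_le_norm r δ
    _ ≤ R * (L * E) := mul_le_mul_of_nonneg_left hδn hRn
  have hzn : ‖z‖ ≤ R + G + E := by
    have hzeq : z = r + g - e.ofLp.2 := by rw [hzdef, hrdef]; abel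
    calc ‖z‖ = ‖r + g - e.ofLp.2‖ := by rw [hzeq]
    _ ≤ ‖r + g‖ + ‖e.ofLp.2‖ := norm_sub_le _ _
    _ ≤ ‖r‖ + ‖g‖ + ‖e.ofLp.2‖ := by linarith [norm_add_le r g]
    _ ≤ R + G + E := by linarith [hE2]
  have hrH : ⟪r, Hm z⟫ ≤ R * (L * (R + G + E)) := by
    calc ⟪r, Hm z⟫ ≤ ‖r‖ * ‖Hm z‖ := real_inner_le_norm r (Hm z)
    _ ≤ R * (L * (R + G + E)) := by
        apply mul_le_mul_of_nonneg_left _ hRn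
        calc ‖Hm z‖ ≤ ‖Hm‖ * ‖z‖ := Hm.le_opNorm z
        _ ≤ L * (R + G + E) := by
            apply mul_le_mul hHnorm hzn (norm_nonneg _) hL.le
  have hPL : 2*μ*(φ x.ofLp.1 - φ ustar) ≤ G^2 := by
    have h := sgrad' μ φ hφ hconv x.ofLp.1 ustar
    rw [← hgdef, ← hG] at h
    exact pl_scalar' μ G _ ‖ustar - x.ofLp.1‖ hμ h
  have hVval : V φ ustar k x = (1-k)*(φ x.ofLp.1 - φ ustar) + (k/2)*R^2 := rfl
  have hV0 : 0 ≤ φ x.ofLp.1 - φ ustar := by linarith [hmin x.ofLp.1]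
  exact keyineq' μ L k C G R E (φ x.ofLp.1 - φ ustar) ⟪g, z⟫ ⟪r, δ⟫ ⟪r, Hm z⟫ (V φ ustar k x)
    hμ hL hk0 hk4 hkL hC hGn hRn hEn hlow hrδ hrH hV0 hPL hVval

end
end

section
/- Let v : ℝ → ℝⁿ be continuous and T-periodic (T > 0) with ∫₀ᵀ v(τ) dτ = 0, and set W(t) = ∫₀ᵗ v(s) ds. Then W is T-periodic and bounded, with M := sup_{t∈[0,T]} ‖W(t)‖ < ∞, and for every δ > 0, every b > 0, and every continuously differentiable function g : [0,b] → ℝ, ‖∫₀ᵇ g(s) v(s/δ) ds‖ ≤ δ M (|g(b)| + ∫₀ᵇ |g′(s)| ds). -/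
open scoped RealInnerProductSpace

open intervalIntegral MeasureTheory Set

noncomputable section

/-- if `v` is continuous, `T`-periodic with zero mean, then its
antiderivative `W(t) = ∫₀ᵗ v` is `T`-periodic and bounded, and for every `δ > 0`,
`b > 0` and every continuously differentiable `g : [0,b] → ℝ`,
`‖∫₀ᵇ g(s) v(s/δ) ds‖ ≤ δ M (|g(b)| + ∫₀ᵇ |g′(s)| ds)` where
`M = sup_{t ∈ [0,T]} ‖W(t)‖`. -/
theorem stmt8 (n : ℕ) (hn : 1 ≤ n) (T : ℝ) (hT : 0 < T)
    (v : ℝ → En n) (hv : Continuous v) (hper : Function.Periodic v T)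
    (hzero : (∫ τ in (0 : ℝ)..T, v τ) = 0)
    (W : ℝ → En n) (hW : W = fun t => ∫ s in (0 : ℝ)..t, v s)
    (M : ℝ) (hM : M = sSup ((fun t => ‖W t‖) '' Set.Icc 0 T)) :
    Function.Periodic W T ∧
    Bornology.IsBounded (Set.range W) ∧
    (∀ t ∈ Set.Icc (0 : ℝ) T, ‖W t‖ ≤ M) ∧
    (∀ δ > (0 : ℝ), ∀ b > (0 : ℝ), ∀ g : ℝ → ℝ, ContDiffOn ℝ 1 g (Set.Icc 0 b) →
      ‖∫ s in (0 : ℝ)..b, g s • v (s / δ)‖ ≤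
        δ * M * (|g b| + ∫ s in (0 : ℝ)..b, |derivWithin g (Set.Icc 0 b) s|)) := by
  have hint : ∀ a b : ℝ, IntervalIntegrable v volume a b :=
    fun a b => hv.intervalIntegrable a b
  -- W is T-periodic
  have hWper : Function.Periodic W T := by
    intro t
    have h1 : (∫ s in t..(t + T), v s) = ∫ s in (0:ℝ)..(0 + T), v s :=
      hper.intervalIntegral_add_eq t 0
    have h2 : W (t + T) = W t + ∫ s in t..(t + T), v s := by
      rw [hW]
      simp only
      rw [intervalIntegral.integral_add_adjacent_intervals (hint 0 t) (hint t (t + T))]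
    rw [h2, h1]
    simp [hzero]
  -- W is continuous
  have hWcont : Continuous W := by
    rw [hW]
    exact intervalIntegral.continuous_primitive hint 0
  -- bound on Icc
  have hbdd : BddAbove ((fun t => ‖W t‖) '' Set.Icc 0 T) :=
    (isCompact_Icc.image_of_continuousOn (hWcont.norm.continuousOn)).bddAbove
  have hMle : ∀ t ∈ Set.Icc (0 : ℝ) T, ‖W t‖ ≤ M := by
    intro t ht
    rw [hM]
    exact le_csSup hbdd ⟨t, ht, rfl⟩
  -- the bound holds everywhere by periodicity
  have hMall : ∀ x : ℝ, ‖W x‖ ≤ M := by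
    intro x
    obtain ⟨y, hy, hxy⟩ := hWper.exists_mem_Ico₀ hT x
    rw [hxy]
    exact hMle y ⟨hy.1, hy.2.le⟩
  have hM0 : 0 ≤ M := le_trans (norm_nonneg _) (hMall 0)
  refine ⟨hWper, ?_, hMle, ?_⟩
  · rw [isBounded_iff_forall_norm_le]
    exact ⟨M, by rintro y ⟨x, rfl⟩; exact hMall x⟩
  · intro δ hδ b hb g hg
    set g' : ℝ → ℝ := fun s => derivWithin g (Set.Icc 0 b) s with hg'
    have hab : (0:ℝ) ≤ b := hb.le
    have huIcc : Set.uIcc (0:ℝ) b = Set.Icc 0 b := Set.uIcc_of_le hab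
    -- derivative of Wδ s = δ • W (s / δ)
    set Wδ : ℝ → En n := fun s => δ • W (s / δ) with hWδ
    have hWd : ∀ s : ℝ, HasDerivAt Wδ (v (s / δ)) s := by
      intro s
      have h1 : HasDerivAt W (v (s / δ)) (s / δ) := by
        rw [hW]
        exact (hv.integral_hasStrictDerivAt 0 (s / δ)).hasDerivAt
      have h2 : HasDerivAt (fun u : ℝ => u / δ) (1 / δ) s := by
        simpa using (hasDerivAt_id s).div_const δ
      have h3 : HasDerivAt (fun u => W (u / δ)) ((1 / δ) • v (s / δ)) s := by
        exact h1.scomp s h2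
      have h4 := h3.const_smul δ
      have h5 : HasDerivAt Wδ (δ • ((1 / δ) • v (s / δ))) s := h4
      rwa [smul_smul, mul_one_div_cancel (ne_of_gt hδ), one_smul] at h5
    -- continuity of g' on Icc
    have hg'cont : ContinuousOn g' (Set.Icc 0 b) := by
      exact hg.continuousOn_derivWithin (uniqueDiffOn_Icc hb) le_rfl
    have hgcont : ContinuousOn g (Set.Icc 0 b) := hg.continuousOn
    have hgd : ∀ x ∈ Set.Icc (0:ℝ) b, HasDerivWithinAt g (g' x) (Set.Icc 0 b) x := by
      intro x hx
      exact ((hg.differentiableOn one_ne_zero) x hx).hasDerivWithinAt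
    -- integrability facts
    have hWδcont : Continuous Wδ := by
      exact (hWcont.comp (continuous_id.div_const δ)).const_smul δ
    have hvδcont : Continuous fun s => v (s / δ) := hv.comp (continuous_id.div_const δ)
    have hI1 : IntervalIntegrable (fun s => g' s • Wδ s) volume 0 b := by
      apply ContinuousOn.intervalIntegrable
      rw [huIcc]
      exact hg'cont.smul hWδcont.continuousOn
    have hI2 : IntervalIntegrable (fun s => g s • v (s / δ)) volume 0 b := by
      apply ContinuousOn.intervalIntegrable
      rw [huIcc]
      exact hgcont.smul hvδcont.continuousOn
    -- integration by parts via FTC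
    have key : (∫ s in (0:ℝ)..b, (g' s • Wδ s + g s • v (s / δ)))
        = g b • Wδ b - g 0 • Wδ 0 := by
      apply intervalIntegral.integral_eq_sub_of_hasDeriv_right
      · rw [huIcc]
        exact (hgcont.smul hWδcont.continuousOn)
      · intro x hx
        rw [min_eq_left hab, max_eq_right hab] at hx
        have hgx : HasDerivAt g (g' x) x := by
          have := hgd x ⟨hx.1.le, hx.2.le⟩
          exact this.hasDerivAt (Icc_mem_nhds hx.1 hx.2)
        have h := ((hgx.smul (hWd x)).hasDerivWithinAt (s := Ioi x))
        rw [add_comm] at h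
        exact h
      · exact hI1.add hI2
    have hW0 : Wδ 0 = 0 := by
      simp [hWδ, hW]
    have key2 : (∫ s in (0:ℝ)..b, g s • v (s / δ))
        = g b • Wδ b - ∫ s in (0:ℝ)..b, g' s • Wδ s := by
      rw [eq_sub_iff_add_eq, ← intervalIntegral.integral_add hI2 hI1]
      rw [show (fun s => g s • v (s / δ) + g' s • Wδ s) = fun s => g' s • Wδ s + g s • v (s / δ) by
        funext s; ring_nf; rw [add_comm]]
      rw [key, hW0]
      simp
    -- norm estimates
    have hWδle : ∀ s : ℝ, ‖Wδ s‖ ≤ δ * M := by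
      intro s
      rw [hWδ]
      simp only [norm_smul, Real.norm_eq_abs, abs_of_pos hδ]
      exact mul_le_mul_of_nonneg_left (hMall _) hδ.le
    have est1 : ‖g b • Wδ b‖ ≤ δ * M * |g b| := by
      rw [norm_smul, Real.norm_eq_abs]
      calc |g b| * ‖Wδ b‖ ≤ |g b| * (δ * M) :=
            mul_le_mul_of_nonneg_left (hWδle b) (abs_nonneg _)
        _ = δ * M * |g b| := by ring
    have est2 : ‖∫ s in (0:ℝ)..b, g' s • Wδ s‖ ≤ δ * M * ∫ s in (0:ℝ)..b, |g' s| := by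
      have h1 : ‖∫ s in (0:ℝ)..b, g' s • Wδ s‖ ≤ ∫ s in (0:ℝ)..b, ‖g' s • Wδ s‖ :=
        intervalIntegral.norm_integral_le_integral_norm hab
      have h2 : (∫ s in (0:ℝ)..b, ‖g' s • Wδ s‖) ≤ ∫ s in (0:ℝ)..b, |g' s| * (δ * M) := by
        apply intervalIntegral.integral_mono_on hab
        · exact hI1.norm
        · apply IntervalIntegrable.mul_const
          apply ContinuousOn.intervalIntegrable
          rw [huIcc]
          exact hg'cont.abs
        · intro x _
          rw [norm_smul, Real.norm_eq_abs]
          exact mul_le_mul_of_nonneg_left (hWδle x) (abs_nonneg _)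
      have h3 : (∫ s in (0:ℝ)..b, |g' s| * (δ * M)) = δ * M * ∫ s in (0:ℝ)..b, |g' s| := by
        rw [intervalIntegral.integral_mul_const]
        ring
      linarith
    calc ‖∫ s in (0:ℝ)..b, g s • v (s / δ)‖
        ≤ ‖g b • Wδ b‖ + ‖∫ s in (0:ℝ)..b, g' s • Wδ s‖ := by
          rw [key2]; exact norm_sub_le _ _
      _ ≤ δ * M * |g b| + δ * M * ∫ s in (0:ℝ)..b, |g' s| := add_le_add est1 est2
      _ = δ * M * (|g b| + ∫ s in (0:ℝ)..b, |g' s|) := by ring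

end
end

section
/- Assume v : ℝ → ℝⁿ is continuous and T-periodic with ∫₀ᵀ v(τ) dτ = 0 and (1/T)∫₀ᵀ v(τ)v(τ)ᵀ dτ = I, and assume φ : ℝⁿ → ℝ is continuously differentiable with L-Lipschitz gradient ∇φ. Then for every a > 0 and every û ∈ ℝⁿ, ‖(1/(aT)) ∫₀ᵀ φ(û + a v(τ)) v(τ) dτ − ∇φ(û)‖ ≤ (aL/(2T)) ∫₀ᵀ ‖v(τ)‖³ dτ. (In particular, the period-average of the classical extremum-seeking estimate a⁻¹ φ(û + a v(τ)) v(τ) equals ∇φ(û) + O(a).) -/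
set_option maxHeartbeats 1000000


open scoped RealInnerProductSpace

noncomputable section

lemma taylor_bound (n : ℕ) (φ : En n → ℝ) (hφ : ContDiff ℝ 1 φ)
    (L : ℝ) (hL : 0 < L) (hlip : LipschitzWith L.toNNReal (gradient φ))
    (x y : En n) :
    |φ y - φ x - ⟪gradient φ x, y - x⟫| ≤ L / 2 * ‖y - x‖ ^ 2 := by
  set c : ℝ → En n := fun t => x + t • (y - x) with hc
  have hgradcont : Continuous (gradient φ) := hlip.continuous
  have hcc : Continuous c := by fun_prop
  have hder : ∀ t : ℝ, HasDerivAt (fun t => φ (c t)) ⟪gradient φ (c t), y - x⟫ t := by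
    intro t
    have h1 : HasDerivAt c (y - x) t := by
      simpa [hc] using ((hasDerivAt_id t).smul_const (y - x)).const_add x
    have h2 : HasGradientAt φ (gradient φ (c t)) (c t) :=
      ((hφ.differentiable one_ne_zero) (c t)).hasGradientAt
    have := (h2.hasFDerivAt).comp_hasDerivAt t h1
    simpa [InnerProductSpace.toDual_apply_apply, Function.comp_def] using this
  have hcontint : Continuous fun t => (⟪gradient φ (c t), y - x⟫ : ℝ) := by
    exact (Continuous.inner (hgradcont.comp hcc) continuous_const)
  have hInt : IntervalIntegrable (fun t => (⟪gradient φ (c t), y - x⟫ : ℝ))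
      MeasureTheory.volume 0 1 := hcontint.intervalIntegrable _ _
  have key : φ y - φ x = ∫ t in (0:ℝ)..1, ⟪gradient φ (c t), y - x⟫ := by
    have := intervalIntegral.integral_eq_sub_of_hasDerivAt
      (f := fun t => φ (c t)) (a := (0:ℝ)) (b := 1) (fun t _ => hder t) hInt
    simp only [hc] at this ⊢
    simpa using this.symm
  have hsplit : φ y - φ x - ⟪gradient φ x, y - x⟫
      = ∫ t in (0:ℝ)..1, (⟪gradient φ (c t), y - x⟫ - ⟪gradient φ x, y - x⟫) := by
    rw [key, intervalIntegral.integral_sub hInt (intervalIntegrable_const)]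
    simp
  rw [hsplit]
  have hbound : ∀ t ∈ Set.uIoc (0:ℝ) 1,
      ‖(⟪gradient φ (c t), y - x⟫ - ⟪gradient φ x, y - x⟫ : ℝ)‖
        ≤ t * (L * ‖y - x‖ ^ 2) := by
    intro t ht
    rw [Set.uIoc_of_le zero_le_one] at ht
    have ht0 : 0 ≤ t := le_of_lt ht.1
    have : (⟪gradient φ (c t), y - x⟫ - ⟪gradient φ x, y - x⟫ : ℝ)
        = ⟪gradient φ (c t) - gradient φ x, y - x⟫ := by
      rw [inner_sub_left]
    rw [this]
    calc ‖(⟪gradient φ (c t) - gradient φ x, y - x⟫ : ℝ)‖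
        ≤ ‖gradient φ (c t) - gradient φ x‖ * ‖y - x‖ := norm_inner_le_norm _ _
      _ ≤ (L * ‖c t - x‖) * ‖y - x‖ := by
          apply mul_le_mul_of_nonneg_right _ (norm_nonneg _)
          have := hlip.dist_le_mul (c t) x
          rw [dist_eq_norm] at this
          simpa [Real.coe_toNNReal L hL.le, dist_eq_norm] using this
      _ = t * (L * ‖y - x‖ ^ 2) := by
          simp only [hc]
          rw [show x + t • (y - x) - x = t • (y - x) by abel, norm_smul,
            Real.norm_eq_abs, abs_of_nonneg ht0]
          ring
  have h1 : ‖∫ t in (0:ℝ)..1, (⟪gradient φ (c t), y - x⟫ - ⟪gradient φ x, y - x⟫ : ℝ)‖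
      ≤ |∫ t in (0:ℝ)..1, t * (L * ‖y - x‖ ^ 2)| := by
    apply intervalIntegral.norm_integral_le_abs_of_norm_le
    · exact (MeasureTheory.ae_restrict_iff' measurableSet_uIoc).2
        (Filter.Eventually.of_forall hbound)
    · exact (Continuous.intervalIntegrable (by fun_prop) _ _)
  have h2 : (∫ t in (0:ℝ)..1, t * (L * ‖y - x‖ ^ 2)) = L / 2 * ‖y - x‖ ^ 2 := by
    rw [intervalIntegral.integral_mul_const, integral_id]
    ring
  rw [← Real.norm_eq_abs]
  calc _ ≤ |∫ t in (0:ℝ)..1, t * (L * ‖y - x‖ ^ 2)| := h1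
    _ = L / 2 * ‖y - x‖ ^ 2 := by
        rw [h2, abs_of_nonneg (by positivity)]

/-- for a continuous `T`-periodic dither `v` with zero mean and identity
second moment `(1/T)∫₀ᵀ v vᵀ = I`, and `φ` continuously differentiable with `L`-Lipschitz
gradient, the period-average of the extremum-seeking estimate satisfies
`‖(1/(aT)) ∫₀ᵀ φ(û + a v(τ)) v(τ) dτ − ∇φ(û)‖ ≤ (aL/(2T)) ∫₀ᵀ ‖v(τ)‖³ dτ`
for every `a > 0` and every `û`. -/
theorem stmt9 (n : ℕ) (hn : 1 ≤ n) (T : ℝ) (hT : 0 < T)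
    (v : ℝ → En n) (hv : Continuous v) (hper : Function.Periodic v T)
    (hzero : (∫ τ in (0 : ℝ)..T, v τ) = 0)
    (hmoment : ∀ z : En n,
      (1 / T) • (∫ τ in (0 : ℝ)..T, (⟪v τ, z⟫ : ℝ) • v τ) = z)
    (φ : En n → ℝ) (hφ : ContDiff ℝ 1 φ)
    (L : ℝ) (hL : 0 < L) (hlip : LipschitzWith L.toNNReal (gradient φ))
    (a : ℝ) (ha : 0 < a) (uhat : En n) :
    ‖(1 / (a * T)) • (∫ τ in (0 : ℝ)..T, φ (uhat + a • v τ) • v τ) - gradient φ uhat‖ ≤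
      (a * L / (2 * T)) * ∫ τ in (0 : ℝ)..T, ‖v τ‖ ^ 3 := by
  set g : En n := gradient φ uhat with hg
  set R : ℝ → ℝ := fun τ => φ (uhat + a • v τ) - φ uhat - a * ⟪g, v τ⟫ with hR
  have hφc : Continuous φ := hφ.continuous
  have hvc : Continuous (fun τ => uhat + a • v τ) := continuous_const.add (hv.const_smul a)
  have hRc : Continuous R :=
    ((hφc.comp hvc).sub continuous_const).sub
      (continuous_const.mul (Continuous.inner continuous_const hv))
  -- integrability
  have hI1 : IntervalIntegrable (fun τ => φ uhat • v τ) MeasureTheory.volume 0 T :=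
    Continuous.intervalIntegrable (hv.const_smul (φ uhat)) _ _
  have hI2 : IntervalIntegrable (fun τ => (⟪g, v τ⟫ : ℝ) • v τ) MeasureTheory.volume 0 T :=
    Continuous.intervalIntegrable (show Continuous (fun τ => (⟪g, v τ⟫ : ℝ) • v τ) from
      (Continuous.inner continuous_const hv : Continuous fun τ => (⟪g, v τ⟫ : ℝ)).smul hv) _ _
  have hI2' : IntervalIntegrable (fun τ => a • ((⟪g, v τ⟫ : ℝ) • v τ)) MeasureTheory.volume 0 T :=
    hI2.smul a
  have hI3 : IntervalIntegrable (fun τ => R τ • v τ) MeasureTheory.volume 0 T :=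
    (Continuous.intervalIntegrable (hRc.smul hv) _ _)
  have hpt : ∀ τ : ℝ, φ (uhat + a • v τ) • v τ
      = φ uhat • v τ + a • ((⟪g, v τ⟫ : ℝ) • v τ) + R τ • v τ := by
    intro τ
    have : φ (uhat + a • v τ) = φ uhat + a * ⟪g, v τ⟫ + R τ := by
      simp only [hR]; ring
    rw [this, add_smul, add_smul, smul_smul]
  have hsplit : (∫ τ in (0 : ℝ)..T, φ (uhat + a • v τ) • v τ)
      = (φ uhat) • (∫ τ in (0 : ℝ)..T, v τ)
        + a • (∫ τ in (0 : ℝ)..T, (⟪g, v τ⟫ : ℝ) • v τ)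
        + (∫ τ in (0 : ℝ)..T, R τ • v τ) := by
    rw [← intervalIntegral.integral_smul, ← intervalIntegral.integral_smul,
      ← intervalIntegral.integral_add hI1 hI2',
      ← intervalIntegral.integral_add (hI1.add hI2') hI3]
    exact intervalIntegral.integral_congr fun τ _ => hpt τ
  have hinner : ∀ τ : ℝ, (⟪g, v τ⟫ : ℝ) = ⟪v τ, g⟫ := fun τ => real_inner_comm _ _
  have hmom : (1 / T) • (∫ τ in (0 : ℝ)..T, (⟪g, v τ⟫ : ℝ) • v τ) = g := by
    rw [show (∫ τ in (0 : ℝ)..T, (⟪g, v τ⟫ : ℝ) • v τ)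
        = ∫ τ in (0 : ℝ)..T, (⟪v τ, g⟫ : ℝ) • v τ from
      intervalIntegral.integral_congr fun τ _ => by rw [hinner τ]]
    exact hmoment g
  have hkey : (1 / (a * T)) • (∫ τ in (0 : ℝ)..T, φ (uhat + a • v τ) • v τ) - g
      = (1 / (a * T)) • (∫ τ in (0 : ℝ)..T, R τ • v τ) := by
    rw [hsplit, hzero, smul_zero, zero_add, smul_add, smul_smul,
      show (1 / (a * T)) * a = 1 / T by field_simp]
    rw [hmom]
    abel
  rw [hkey]
  have haT : 0 < a * T := mul_pos ha hT
  rw [norm_smul, Real.norm_eq_abs, abs_of_pos (by positivity)]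
  -- bound the integral norm
  have hbound : ∀ τ ∈ Set.uIoc (0:ℝ) T, ‖R τ • v τ‖ ≤ (a ^ 2 * L / 2) * ‖v τ‖ ^ 3 := by
    intro τ _
    rw [norm_smul, Real.norm_eq_abs]
    have hRb : |R τ| ≤ L / 2 * ‖a • v τ‖ ^ 2 := by
      have := taylor_bound n φ hφ L hL hlip uhat (uhat + a • v τ)
      simp only [add_sub_cancel_left] at this
      have heq : R τ = φ (uhat + a • v τ) - φ uhat - ⟪g, a • v τ⟫ := by
        simp only [hR, real_inner_smul_right]
      rw [heq]
      simpa [hg] using this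
    have hRb' : |R τ| ≤ L / 2 * (a ^ 2 * ‖v τ‖ ^ 2) := by
      refine hRb.trans_eq ?_
      rw [norm_smul, Real.norm_eq_abs, abs_of_pos ha, mul_pow]
    calc |R τ| * ‖v τ‖ ≤ (L / 2 * (a ^ 2 * ‖v τ‖ ^ 2)) * ‖v τ‖ :=
          mul_le_mul_of_nonneg_right hRb' (norm_nonneg _)
      _ = (a ^ 2 * L / 2) * ‖v τ‖ ^ 3 := by ring
  have h1 : ‖∫ τ in (0 : ℝ)..T, R τ • v τ‖
      ≤ |∫ τ in (0 : ℝ)..T, (a ^ 2 * L / 2) * ‖v τ‖ ^ 3| := by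
    apply intervalIntegral.norm_integral_le_abs_of_norm_le
    · exact (MeasureTheory.ae_restrict_iff' measurableSet_uIoc).2
        (Filter.Eventually.of_forall hbound)
    · exact Continuous.intervalIntegrable (continuous_const.mul ((hv.norm).pow 3)) _ _
  have h2 : (∫ τ in (0 : ℝ)..T, (a ^ 2 * L / 2) * ‖v τ‖ ^ 3)
      = (a ^ 2 * L / 2) * ∫ τ in (0 : ℝ)..T, ‖v τ‖ ^ 3 :=
    intervalIntegral.integral_const_mul _ _
  have hintnn : 0 ≤ ∫ τ in (0 : ℝ)..T, ‖v τ‖ ^ 3 :=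
    intervalIntegral.integral_nonneg hT.le fun τ _ => by positivity
  calc (1 / (a * T)) * ‖∫ τ in (0 : ℝ)..T, R τ • v τ‖
      ≤ (1 / (a * T)) * |(a ^ 2 * L / 2) * ∫ τ in (0 : ℝ)..T, ‖v τ‖ ^ 3| := by
        apply mul_le_mul_of_nonneg_left _ (by positivity)
        rw [← h2]; exact h1
    _ = (a * L / (2 * T)) * ∫ τ in (0 : ℝ)..T, ‖v τ‖ ^ 3 := by
        rw [abs_of_nonneg (by positivity)]
        field_simp

end
end

section
/- Assume v : ℝ → ℝⁿ is continuous and T-periodic with ∫₀ᵀ v(τ) dτ = 0 and (1/T)∫₀ᵀ v(τ)v(τ)ᵀ dτ = I, and assume φ : ℝⁿ → ℝ is continuously differentiable with L-Lipschitz gradient. Fix û, y₀ ∈ ℝⁿ and b > 0. For ε > 0, let y_ε : [0,b] → ℝⁿ be the solution of the oscillatory filter equation ẏ_ε(t) = (1/ε) φ(û + ε v(t/ε²)) v(t/ε²) − y_ε(t) with y_ε(0) = y₀, and let ȳ : [0,b] → ℝⁿ be the solution of the averaged equation ȳ′(t) = ∇φ(û) − ȳ(t) with ȳ(0) = y₀.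 Then there exists C > 0 (depending only on T, L, sup‖v‖, |φ(û)|, ‖∇φ(û)‖ and b) such that sup_{t∈[0,b]} ‖y_ε(t) − ȳ(t)‖ ≤ C ε for all ε ∈ (0,1]. -/
open scoped RealInnerProductSpace

set_option maxHeartbeats 1000000

noncomputable section

/-- Taylor bound from a Lipschitz gradient. -/
lemma taylor_bd {n : ℕ} (φ : En n → ℝ) (hφ : ContDiff ℝ 1 φ) (L : ℝ) (hL : 0 ≤ L)
    (hlip : LipschitzWith L.toNNReal (gradient φ)) (u x : En n) :
    |φ (u + x) - φ u - ⟪gradient φ u, x⟫| ≤ L * ‖x‖ * ‖x‖ := by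
  set G := gradient φ u
  set ψ : En n → ℝ := fun y => φ y - (InnerProductSpace.toDual ℝ (En n)) G y with hψ
  have hd : ∀ y ∈ Metric.closedBall u ‖x‖,
      HasFDerivWithinAt ψ ((InnerProductSpace.toDual ℝ (En n)) (gradient φ y - G))
        (Metric.closedBall u ‖x‖) y := by
    intro y _
    have h1 : HasFDerivAt φ ((InnerProductSpace.toDual ℝ (En n)) (gradient φ y)) y :=
      ((hφ.differentiable one_ne_zero) y).hasGradientAt.hasFDerivAt
    have h2 : HasFDerivAt (fun z => (InnerProductSpace.toDual ℝ (En n)) G z)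
        ((InnerProductSpace.toDual ℝ (En n)) G) y :=
      ((InnerProductSpace.toDual ℝ (En n)) G).hasFDerivAt
    have := (h1.sub h2)
    rw [map_sub]
    exact this.hasFDerivWithinAt
  have hbd : ∀ y ∈ Metric.closedBall u ‖x‖,
      ‖(InnerProductSpace.toDual ℝ (En n)) (gradient φ y - G)‖ ≤ L * ‖x‖ := by
    intro y hy
    rw [(InnerProductSpace.toDual ℝ (En n)).norm_map]
    calc ‖gradient φ y - G‖ ≤ L.toNNReal * ‖y - u‖ := hlip.norm_sub_le y u
    _ ≤ L * ‖x‖ := by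
        rw [Real.coe_toNNReal _ hL]
        exact mul_le_mul_of_nonneg_left (by simpa [dist_eq_norm] using hy) hL
  have key := (convex_closedBall u ‖x‖).norm_image_sub_le_of_norm_hasFDerivWithin_le hd hbd
    (Metric.mem_closedBall_self (norm_nonneg x))
    (show u + x ∈ Metric.closedBall u ‖x‖ by simp [Metric.mem_closedBall, dist_eq_norm])
  have : ψ (u + x) - ψ u = φ (u + x) - φ u - ⟪G, x⟫ := by
    simp only [hψ, InnerProductSpace.toDual_apply_apply, inner_add_right]; ring
  calc |φ (u + x) - φ u - ⟪G, x⟫| = ‖ψ (u + x) - ψ u‖ := by rw [this]; rfl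
  _ ≤ L * ‖x‖ * ‖u + x - u‖ := key
  _ = L * ‖x‖ * ‖x‖ := by simp

/-- Oscillation bound: the weighted integral of a fast-oscillating zero-mean periodic
function is `O(c)`. -/
lemma osc_bd {n : ℕ} (g : ℝ → En n) (hg : Continuous g) (T : ℝ) (hT : 0 < T)
    (hper : Function.Periodic g T) (hzero : (∫ τ in (0:ℝ)..T, g τ) = 0) :
    ∃ K ≥ (0:ℝ), ∀ b t c : ℝ, 0 ≤ t → t ≤ b → 0 < c →
      ‖∫ s in (0:ℝ)..t, Real.exp s • g (s / c)‖ ≤ (2 + b) * Real.exp b * K * c := by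
  set G : ℝ → En n := fun θ => ∫ τ in (0:ℝ)..θ, g τ with hG
  have hGc : Continuous G :=
    intervalIntegral.continuous_primitive (fun a b => hg.intervalIntegrable a b) 0
  have hGper : Function.Periodic G T := by
    intro θ
    have h1 : (∫ τ in (0:ℝ)..(θ + T), g τ)
        = (∫ τ in (0:ℝ)..θ, g τ) + ∫ τ in θ..(θ + T), g τ :=
      (intervalIntegral.integral_add_adjacent_intervals (hg.intervalIntegrable 0 θ)
        (hg.intervalIntegrable θ (θ + T))).symm
    have h2 : (∫ τ in θ..(θ + T), g τ) = ∫ τ in (0:ℝ)..(0 + T), g τ :=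
      hper.intervalIntegral_add_eq θ 0
    simp only [hG]
    rw [h1, h2]
    simpa using hzero
  obtain ⟨K, hK⟩ := (hGper.isBounded_of_continuous hT.ne' hGc).exists_norm_le
  have hKb : ∀ θ, ‖G θ‖ ≤ K := fun θ => hK _ (Set.mem_range_self θ)
  have hK0 : 0 ≤ K := le_trans (norm_nonneg _) (hKb 0)
  refine ⟨K, hK0, fun b t c ht htb hc => ?_⟩
  have hb0 : (0:ℝ) ≤ b := le_trans ht htb
  have hGd : ∀ θ, HasDerivAt G (g θ) θ := fun θ =>
    intervalIntegral.integral_hasDerivAt_right (hg.intervalIntegrable 0 θ)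
      (hg.stronglyMeasurableAtFilter _ _) hg.continuousAt
  set P : ℝ → En n := fun s => Real.exp s • G (s / c) with hP
  have hPd : ∀ s, HasDerivAt P (Real.exp s • (c⁻¹ • g (s / c)) + Real.exp s • G (s / c)) s := by
    intro s
    have h1 : HasDerivAt (fun s : ℝ => G (s / c)) (c⁻¹ • g (s / c)) s := by
      have hl : HasDerivAt (fun s : ℝ => s / c) c⁻¹ s := by
        simpa using (hasDerivAt_id s).div_const c
      exact (hGd (s / c)).scomp s hl
    exact (Real.hasDerivAt_exp s).smul h1
  have hint : ∀ a b : ℝ, IntervalIntegrable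
      (fun s => Real.exp s • (c⁻¹ • g (s / c)) + Real.exp s • G (s / c)) MeasureTheory.volume a b := by
    intro a b
    exact ((Real.continuous_exp.smul ((hg.comp (continuous_id.div_const c)).const_smul c⁻¹)).add
      (Real.continuous_exp.smul (hGc.comp (continuous_id.div_const c)))).intervalIntegrable a b
  have hftc : (∫ s in (0:ℝ)..t, (Real.exp s • (c⁻¹ • g (s / c)) + Real.exp s • G (s / c)))
      = P t - P 0 :=
    intervalIntegral.integral_eq_sub_of_hasDerivAt (fun s _ => hPd s) (hint 0 t)
  have hsplit : (∫ s in (0:ℝ)..t, (Real.exp s • (c⁻¹ • g (s / c)) + Real.exp s • G (s / c)))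
      = c⁻¹ • (∫ s in (0:ℝ)..t, Real.exp s • g (s / c))
        + ∫ s in (0:ℝ)..t, Real.exp s • G (s / c) := by
    have hc1 : Continuous fun s : ℝ => Real.exp s • (c⁻¹ • g (s / c)) := by fun_prop
    have hc2 : Continuous fun s : ℝ => Real.exp s • G (s / c) := by fun_prop
    rw [intervalIntegral.integral_add (hc1.intervalIntegrable 0 t) (hc2.intervalIntegrable 0 t)]
    rw [← intervalIntegral.integral_smul]
    congr 1
    apply intervalIntegral.integral_congr
    intro s _
    exact smul_comm _ _ _
  have hmain : (∫ s in (0:ℝ)..t, Real.exp s • g (s / c))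
      = c • (P t - P 0 - ∫ s in (0:ℝ)..t, Real.exp s • G (s / c)) := by
    have := hsplit.symm.trans hftc
    have h' : c⁻¹ • (∫ s in (0:ℝ)..t, Real.exp s • g (s / c))
        = P t - P 0 - ∫ s in (0:ℝ)..t, Real.exp s • G (s / c) := by
      rw [← this]; abel
    calc (∫ s in (0:ℝ)..t, Real.exp s • g (s / c))
        = c • c⁻¹ • (∫ s in (0:ℝ)..t, Real.exp s • g (s / c)) := by
          rw [smul_smul, mul_inv_cancel₀ hc.ne', one_smul]
      _ = _ := by rw [h']
  rw [hmain]
  have hexpb : ∀ s, s ≤ b → Real.exp s ≤ Real.exp b := fun s hs => Real.exp_le_exp.2 hs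
  have hPb : ∀ s, s ≤ b → ‖P s‖ ≤ Real.exp b * K := by
    intro s hs
    rw [hP]; simp only [norm_smul, Real.norm_eq_abs, abs_of_pos (Real.exp_pos s)]
    exact mul_le_mul (hexpb s hs) (hKb _) (norm_nonneg _) (Real.exp_pos b).le
  have hIb : ‖∫ s in (0:ℝ)..t, Real.exp s • G (s / c)‖ ≤ Real.exp b * K * b := by
    have : ∀ s ∈ Set.uIoc (0:ℝ) t, ‖Real.exp s • G (s / c)‖ ≤ Real.exp b * K := by
      intro s hs
      have hs' : s ≤ t := by
        rcases Set.mem_uIoc.1 hs with h | h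
        · exact h.2
        · exact h.2.trans ht
      exact hPb s (hs'.trans htb)
    calc ‖∫ s in (0:ℝ)..t, Real.exp s • G (s / c)‖ ≤ Real.exp b * K * |t - 0| :=
          intervalIntegral.norm_integral_le_of_norm_le_const this
      _ ≤ Real.exp b * K * b := by
          rw [sub_zero, abs_of_nonneg ht]
          exact mul_le_mul_of_nonneg_left htb (by positivity)
  rw [norm_smul, Real.norm_eq_abs, abs_of_pos hc, mul_comm]
  apply mul_le_mul_of_nonneg_right _ hc.le
  calc ‖P t - P 0 - ∫ s in (0:ℝ)..t, Real.exp s • G (s / c)‖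
      ≤ ‖P t - P 0‖ + ‖∫ s in (0:ℝ)..t, Real.exp s • G (s / c)‖ := norm_sub_le _ _
    _ ≤ (‖P t‖ + ‖P 0‖) + Real.exp b * K * b := add_le_add (norm_sub_le _ _) hIb
    _ ≤ (Real.exp b * K + Real.exp b * K) + Real.exp b * K * b :=
        add_le_add (add_le_add (hPb t htb) (hPb 0 hb0)) le_rfl
    _ = (2 + b) * Real.exp b * K := by ring

/-- Variation of constants: if `w' = h - w` on `[0,b]` and `w 0 = 0`, then
`exp t • w t = ∫₀ᵗ exp s • h s`. -/
lemma voc {n : ℕ} (b : ℝ) (w h : ℝ → En n) (hh : Continuous h) (hw0 : w 0 = 0)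
    (hw : ∀ s ∈ Set.Icc (0:ℝ) b, HasDerivWithinAt w (h s - w s) (Set.Icc (0:ℝ) b) s)
    (t : ℝ) (ht : t ∈ Set.Icc (0:ℝ) b) :
    Real.exp t • w t = ∫ s in (0:ℝ)..t, Real.exp s • h s := by
  set z : ℝ → En n := fun s => Real.exp s • w s with hz
  have hwc : ContinuousOn w (Set.Icc (0:ℝ) b) := fun s hs => (hw s hs).continuousWithinAt
  have hzc : ContinuousOn z (Set.Icc (0:ℝ) b) :=
    (Real.continuous_exp.continuousOn).smul hwc
  have hb0 : (0:ℝ) ≤ b := le_trans ht.1 ht.2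
  have hzd : ∀ s ∈ Set.Ioo (0:ℝ) t, HasDerivWithinAt z (Real.exp s • h s) (Set.Ioi s) s := by
    intro s hs
    have hsb : s ∈ Set.Ioo (0:ℝ) b := ⟨hs.1, lt_of_lt_of_le hs.2 ht.2⟩
    have hmem : Set.Icc (0:ℝ) b ∈ nhds s :=
      mem_nhds_iff.2 ⟨Set.Ioo 0 b, Set.Ioo_subset_Icc_self, isOpen_Ioo, hsb⟩
    have hw' : HasDerivAt w (h s - w s) s :=
      (hw s (Set.Ioo_subset_Icc_self hsb)).hasDerivAt hmem
    have : HasDerivAt z (Real.exp s • (h s - w s) + Real.exp s • w s) s :=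
      (Real.hasDerivAt_exp s).smul hw'
    have heq : Real.exp s • (h s - w s) + Real.exp s • w s = Real.exp s • h s := by
      rw [smul_sub]; abel
    exact (heq ▸ this).hasDerivWithinAt
  have := intervalIntegral.integral_eq_sub_of_hasDeriv_right_of_le ht.1
    (hzc.mono (Set.Icc_subset_Icc le_rfl ht.2)) hzd
    ((Real.continuous_exp.smul hh).intervalIntegrable 0 t)
  rw [this, hz]
  simp [hw0]

/-- closeness of the oscillatory filter to its average. If `y_ε` solves
`ẏ_ε(t) = (1/ε) φ(û + ε v(t/ε²)) v(t/ε²) − y_ε(t)` on `[0,b]` with `y_ε(0) = y₀`, and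
`ȳ` solves the averaged equation `ȳ′ = ∇φ(û) − ȳ`, `ȳ(0) = y₀`, then there exists
`C > 0` such that `sup_{t∈[0,b]} ‖y_ε(t) − ȳ(t)‖ ≤ C ε` for all `ε ∈ (0,1]`. -/
theorem stmt10 (n : ℕ) (hn : 1 ≤ n) (T : ℝ) (hT : 0 < T)
    (v : ℝ → En n) (hv : Continuous v) (hper : Function.Periodic v T)
    (hzero : (∫ τ in (0 : ℝ)..T, v τ) = 0)
    (hmoment : ∀ z : En n,
      (1 / T) • (∫ τ in (0 : ℝ)..T, (⟪v τ, z⟫ : ℝ) • v τ) = z)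
    (φ : En n → ℝ) (hφ : ContDiff ℝ 1 φ)
    (L : ℝ) (hL : 0 < L) (hlip : LipschitzWith L.toNNReal (gradient φ))
    (uhat y₀ : En n) (b : ℝ) (hb : 0 < b) :
    ∃ C > (0 : ℝ), ∀ ε : ℝ, 0 < ε → ε ≤ 1 →
      ∀ yε : ℝ → En n, yε 0 = y₀ →
        (∀ t ∈ Set.Icc (0 : ℝ) b,
          HasDerivWithinAt yε
            (((1 / ε) * φ (uhat + ε • v (t / ε ^ 2))) • v (t / ε ^ 2) - yε t)
            (Set.Icc (0 : ℝ) b) t) →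
      ∀ ybar : ℝ → En n, ybar 0 = y₀ →
        (∀ t ∈ Set.Icc (0 : ℝ) b,
          HasDerivWithinAt ybar (gradient φ uhat - ybar t) (Set.Icc (0 : ℝ) b) t) →
      ∀ t ∈ Set.Icc (0 : ℝ) b, ‖yε t - ybar t‖ ≤ C * ε := by
  obtain ⟨M, hM⟩ := (hper.isBounded_of_continuous hT.ne' hv).exists_norm_le
  have hMb : ∀ θ, ‖v θ‖ ≤ M := fun θ => hM _ (Set.mem_range_self θ)
  have hM0 : 0 ≤ M := le_trans (norm_nonneg _) (hMb 0)
  set D : En n := gradient φ uhat with hD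
  obtain ⟨K₁, hK₁0, hK₁⟩ := osc_bd v hv T hT hper hzero
  set g₂ : ℝ → En n := fun θ => (⟪D, v θ⟫ : ℝ) • v θ - D with hg₂def
  have hg₂c : Continuous g₂ := by
    apply Continuous.sub _ continuous_const
    exact (continuous_const.inner (𝕜 := ℝ) hv).smul hv
  have hg₂per : Function.Periodic g₂ T := fun θ => by simp [hg₂def, hper θ]
  have hg₂zero : (∫ τ in (0 : ℝ)..T, g₂ τ) = 0 := by
    have h1 : (∫ τ in (0 : ℝ)..T, ((⟪v τ, D⟫ : ℝ) • v τ)) = T • D := by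
      have := hmoment D
      calc (∫ τ in (0 : ℝ)..T, ((⟪v τ, D⟫ : ℝ) • v τ))
          = T • ((1 / T) • (∫ τ in (0 : ℝ)..T, ((⟪v τ, D⟫ : ℝ) • v τ))) := by
            rw [smul_smul, mul_one_div, div_self hT.ne', one_smul]
        _ = T • D := by rw [this]
    have h2 : ∀ τ, g₂ τ = (⟪v τ, D⟫ : ℝ) • v τ - D := by
      intro τ; simp only [hg₂def]; rw [real_inner_comm]
    rw [intervalIntegral.integral_congr (g := fun τ => (⟪v τ, D⟫ : ℝ) • v τ - D)
      (fun τ _ => h2 τ)]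
    rw [intervalIntegral.integral_sub ((show Continuous fun τ => (⟪v τ, D⟫ : ℝ) • v τ from (hv.inner (𝕜 := ℝ) continuous_const).smul hv).intervalIntegrable 0 T)
      (continuous_const.intervalIntegrable 0 T)]
    rw [h1]
    simp [sub_eq_zero, smul_smul]
  obtain ⟨K₂, hK₂0, hK₂⟩ := osc_bd g₂ hg₂c T hT hg₂per hg₂zero
  have hexpb0 : (0:ℝ) < Real.exp b := Real.exp_pos b
  set C : ℝ := b * Real.exp b * (L * M ^ 3) + |φ uhat| * ((2 + b) * Real.exp b * K₁)
      + (2 + b) * Real.exp b * K₂ + 1 with hC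
  have hC0 : 0 < C := by
    have h1 : 0 ≤ b * Real.exp b * (L * M ^ 3) :=
      mul_nonneg (mul_nonneg hb.le hexpb0.le) (mul_nonneg hL.le (pow_nonneg hM0 3))
    have h2 : 0 ≤ |φ uhat| * ((2 + b) * Real.exp b * K₁) :=
      mul_nonneg (abs_nonneg _) (mul_nonneg (mul_nonneg (by linarith) hexpb0.le) hK₁0)
    have h3 : 0 ≤ (2 + b) * Real.exp b * K₂ :=
      mul_nonneg (mul_nonneg (by linarith) hexpb0.le) hK₂0
    rw [hC]; linarith
  refine ⟨C, hC0, ?_⟩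
  intro ε hε hε1 yε hyε0 hyεd ybar hybar0 hybard t ht
  set c : ℝ := ε ^ 2 with hc
  have hc0 : 0 < c := by positivity
  have hφc : Continuous φ := hφ.continuous
  set h : ℝ → En n := fun s => ((1 / ε) * φ (uhat + ε • v (s / c))) • v (s / c) - D with hhdef
  have hhc : Continuous h := by
    apply Continuous.sub _ continuous_const
    exact (continuous_const.mul (hφc.comp (continuous_const.add
      ((hv.comp (continuous_id.div_const c)).const_smul ε)))).smul
      (hv.comp (continuous_id.div_const c))
  set w : ℝ → En n := fun s => yε s - ybar s with hwdef
  have hw0 : w 0 = 0 := by simp [hwdef, hyε0, hybar0]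
  have hwd : ∀ s ∈ Set.Icc (0:ℝ) b, HasDerivWithinAt w (h s - w s) (Set.Icc (0:ℝ) b) s := by
    intro s hs
    have hder := (hyεd s hs).sub (hybard s hs)
    have heq : (((1 / ε) * φ (uhat + ε • v (s / c))) • v (s / c) - yε s) - (D - ybar s)
        = h s - w s := by
      simp only [hhdef, hwdef]; abel
    exact heq ▸ hder
  have hvoc := voc b w h hhc hw0 hwd t ht
  set A : ℝ → En n := fun s =>
    ((1 / ε) * (φ (uhat + ε • v (s / c)) - φ uhat - ⟪D, ε • v (s / c)⟫)) • v (s / c) with hAdef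
  set B : ℝ → En n := fun s => (φ uhat / ε) • v (s / c) with hBdef
  have hsplit : ∀ s : ℝ, h s = A s + (B s + g₂ (s / c)) := by
    intro s
    have hinner : (⟪D, ε • v (s / c)⟫ : ℝ) = ε * ⟪D, v (s / c)⟫ := real_inner_smul_right _ _ _
    simp only [hhdef, hAdef, hBdef, hg₂def, hinner]
    have hco : (1 / ε) * φ (uhat + ε • v (s / c))
        = (1 / ε) * (φ (uhat + ε • v (s / c)) - φ uhat - ε * ⟪D, v (s / c)⟫)
          + (φ uhat / ε + ⟪D, v (s / c)⟫) := by
      field_simp; ring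
    rw [hco, add_smul, add_smul]
    abel
  have hAc : Continuous fun s => Real.exp s • A s := by
    apply Real.continuous_exp.smul
    refine Continuous.smul (f := fun s => (1 / ε) * (φ (uhat + ε • v (s / c)) - φ uhat - ⟪D, ε • v (s / c)⟫)) ?_ (hv.comp (continuous_id.div_const c))
    apply continuous_const.mul
    apply Continuous.sub
    · apply Continuous.sub _ continuous_const
      exact hφc.comp (continuous_const.add ((hv.comp (continuous_id.div_const c)).const_smul ε))
    · exact continuous_const.inner (𝕜 := ℝ) ((hv.comp (continuous_id.div_const c)).const_smul ε)
  have hBc : Continuous fun s => Real.exp s • B s :=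
    Real.continuous_exp.smul ((continuous_const : Continuous fun _ : ℝ => φ uhat / ε).smul (hv.comp (continuous_id.div_const c)))
  have hGc : Continuous fun s => Real.exp s • g₂ (s / c) :=
    Real.continuous_exp.smul (hg₂c.comp (continuous_id.div_const c))
  have hIeq : (∫ s in (0:ℝ)..t, Real.exp s • h s)
      = (∫ s in (0:ℝ)..t, Real.exp s • A s)
        + ((∫ s in (0:ℝ)..t, Real.exp s • B s) + ∫ s in (0:ℝ)..t, Real.exp s • g₂ (s / c)) := by
    rw [← intervalIntegral.integral_add (hBc.intervalIntegrable 0 t) (hGc.intervalIntegrable 0 t),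
      ← intervalIntegral.integral_add (hAc.intervalIntegrable 0 t)
        ((show Continuous fun s => Real.exp s • B s + Real.exp s • g₂ (s / c) from hBc.add hGc).intervalIntegrable 0 t)]
    apply intervalIntegral.integral_congr
    intro s _
    simp only [hsplit s, smul_add]
  -- bound on A
  have hAb : ∀ s ∈ Set.uIoc (0:ℝ) t, ‖Real.exp s • A s‖ ≤ Real.exp b * (L * M ^ 3 * ε) := by
    intro s hs
    have hst : s ≤ b := by
      rcases Set.mem_uIoc.1 hs with h' | h'
      · exact h'.2.trans ht.2
      · exact h'.2.trans (ht.1.trans ht.2)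
    have htay := taylor_bd φ hφ L hL.le hlip uhat (ε • v (s / c))
    rw [← hD] at htay
    have hnε : ‖ε • v (s / c)‖ = ε * ‖v (s / c)‖ := by
      rw [norm_smul, Real.norm_eq_abs, abs_of_pos hε]
    rw [hnε] at htay
    have hq := hMb (s / c)
    have hq0 := norm_nonneg (v (s / c))
    have hr : |(1 / ε) * (φ (uhat + ε • v (s / c)) - φ uhat - ⟪D, ε • v (s / c)⟫)|
        ≤ L * M ^ 2 * ε := by
      rw [abs_mul, abs_of_pos (by positivity : (0:ℝ) < 1 / ε)]
      calc (1 / ε) * |φ (uhat + ε • v (s / c)) - φ uhat - ⟪D, ε • v (s / c)⟫|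
          ≤ (1 / ε) * (L * (ε * ‖v (s / c)‖) * (ε * ‖v (s / c)‖)) := by
            exact mul_le_mul_of_nonneg_left htay (by positivity)
        _ = L * ‖v (s / c)‖ ^ 2 * ε := by field_simp
        _ ≤ L * M ^ 2 * ε := by nlinarith [mul_le_mul hq hq hq0 hM0, mul_nonneg hL.le hε.le, sq_nonneg (‖v (s / c)‖ - M)]
    calc ‖Real.exp s • A s‖ = Real.exp s * (|(1 / ε) * (φ (uhat + ε • v (s / c)) - φ uhat
          - ⟪D, ε • v (s / c)⟫)| * ‖v (s / c)‖) := by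
          rw [hAdef]
          simp only [norm_smul, Real.norm_eq_abs, abs_of_pos (Real.exp_pos s)]
      _ ≤ Real.exp b * ((L * M ^ 2 * ε) * M) := by
          apply mul_le_mul (Real.exp_le_exp.2 hst) _ (by positivity) hexpb0.le
          exact mul_le_mul hr hq hq0 (by positivity)
      _ = Real.exp b * (L * M ^ 3 * ε) := by ring
  have hIA : ‖∫ s in (0:ℝ)..t, Real.exp s • A s‖ ≤ b * Real.exp b * (L * M ^ 3) * ε := by
    calc ‖∫ s in (0:ℝ)..t, Real.exp s • A s‖ ≤ Real.exp b * (L * M ^ 3 * ε) * |t - 0| :=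
        intervalIntegral.norm_integral_le_of_norm_le_const hAb
      _ ≤ Real.exp b * (L * M ^ 3 * ε) * b := by
          apply mul_le_mul_of_nonneg_left _ (by positivity)
          rw [sub_zero, abs_of_nonneg ht.1]; exact ht.2
      _ = b * Real.exp b * (L * M ^ 3) * ε := by ring
  -- bound on B
  have hIB : ‖∫ s in (0:ℝ)..t, Real.exp s • B s‖
      ≤ |φ uhat| * ((2 + b) * Real.exp b * K₁) * ε := by
    have hBeq : (∫ s in (0:ℝ)..t, Real.exp s • B s)
        = (φ uhat / ε) • ∫ s in (0:ℝ)..t, Real.exp s • v (s / c) := by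
      rw [← intervalIntegral.integral_smul]
      apply intervalIntegral.integral_congr
      intro s _
      simp only [hBdef]
      exact (smul_comm _ _ _).symm
    rw [hBeq, norm_smul, Real.norm_eq_abs]
    calc |φ uhat / ε| * ‖∫ s in (0:ℝ)..t, Real.exp s • v (s / c)‖
        ≤ |φ uhat / ε| * ((2 + b) * Real.exp b * K₁ * c) := by
          exact mul_le_mul_of_nonneg_left (hK₁ b t c ht.1 ht.2 hc0) (abs_nonneg _)
      _ = |φ uhat| * ((2 + b) * Real.exp b * K₁) * ε := by
          rw [abs_div, abs_of_pos hε, hc]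
          field_simp
  -- bound on g₂ part
  have hIG : ‖∫ s in (0:ℝ)..t, Real.exp s • g₂ (s / c)‖ ≤ (2 + b) * Real.exp b * K₂ * ε := by
    calc ‖∫ s in (0:ℝ)..t, Real.exp s • g₂ (s / c)‖ ≤ (2 + b) * Real.exp b * K₂ * c :=
        hK₂ b t c ht.1 ht.2 hc0
      _ ≤ (2 + b) * Real.exp b * K₂ * ε := by
          apply mul_le_mul_of_nonneg_left _
            (mul_nonneg (mul_nonneg (by linarith) hexpb0.le) hK₂0)
          rw [hc]
          nlinarith
  -- conclude
  have hwle : ‖w t‖ ≤ ‖Real.exp t • w t‖ := by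
    rw [norm_smul, Real.norm_eq_abs, abs_of_pos (Real.exp_pos t)]
    nlinarith [Real.one_le_exp ht.1, norm_nonneg (w t)]
  have : ‖yε t - ybar t‖ = ‖w t‖ := by rw [hwdef]
  rw [this]
  calc ‖w t‖ ≤ ‖Real.exp t • w t‖ := hwle
    _ = ‖(∫ s in (0:ℝ)..t, Real.exp s • A s)
        + ((∫ s in (0:ℝ)..t, Real.exp s • B s) + ∫ s in (0:ℝ)..t, Real.exp s • g₂ (s / c))‖ := by
        rw [hvoc, hIeq]
    _ ≤ ‖∫ s in (0:ℝ)..t, Real.exp s • A s‖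
        + (‖∫ s in (0:ℝ)..t, Real.exp s • B s‖ + ‖∫ s in (0:ℝ)..t, Real.exp s • g₂ (s / c)‖) :=
        (norm_add_le _ _).trans (by gcongr; exact norm_add_le _ _)
    _ ≤ b * Real.exp b * (L * M ^ 3) * ε + (|φ uhat| * ((2 + b) * Real.exp b * K₁) * ε
        + (2 + b) * Real.exp b * K₂ * ε) := by
        exact add_le_add hIA (add_le_add hIB hIG)
    _ ≤ C * ε := by
        rw [hC]
        nlinarith

end
end

section
/- Assume v : ℝ → ℝⁿ is continuous and T-periodic with ∫₀ᵀ v(τ) dτ = 0 and (1/T)∫₀ᵀ v(τ)v(τ)ᵀ dτ = I, and assume φ : ℝⁿ → ℝ is continuously differentiable with L-Lipschitz gradient. Fix û, ŷ, y₀ ∈ ℝⁿ, k > 0 and b > 0. For ε > 0, let y_ε solve ẏ_ε(t) = (1/ε) φ(û + ε v(t/ε²)) v(t/ε²) − y_ε(t), y_ε(0) = y₀, on [0,b], and define the inter-event errors e_u(t) = −k ŷ t and e_y(t) = y_ε(t) − y₀. Then for every ρ > 0 there exist d ∈ (0,b] and ε* ∈ (0,1] (depending only on ρ, T, L, sup‖v‖,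 |φ(û)|, ‖∇φ(û)‖, ‖y₀‖, k, ‖ŷ‖ and b) such that for all ε ∈ (0,ε*] and all t ∈ [0,d], ‖e_u(t)‖² + ‖e_y(t)‖² < ρ; i.e., the triggering threshold ρ cannot be reached before time d, uniformly in ε. -/
open scoped RealInnerProductSpace

noncomputable section

set_option maxHeartbeats 1000000 in
/-- uniform (in `ε`) minimum time before triggering. If `y_ε` solves the
oscillatory filter equation on `[0,b]` with `y_ε(0) = y₀`, and the inter-event errors are
`e_u(t) = −k ŷ t`, `e_y(t) = y_ε(t) − y₀`, then for every threshold `ρ > 0` there exist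
`d ∈ (0,b]` and `ε* ∈ (0,1]` such that for all `ε ∈ (0,ε*]` and all `t ∈ [0,d]`,
`‖e_u(t)‖² + ‖e_y(t)‖² < ρ`. -/
theorem stmt11 (n : ℕ) (hn : 1 ≤ n) (T : ℝ) (hT : 0 < T)
    (v : ℝ → En n) (hv : Continuous v) (hper : Function.Periodic v T)
    (hzero : (∫ τ in (0 : ℝ)..T, v τ) = 0)
    (hmoment : ∀ z : En n,
      (1 / T) • (∫ τ in (0 : ℝ)..T, (⟪v τ, z⟫ : ℝ) • v τ) = z)
    (φ : En n → ℝ) (hφ : ContDiff ℝ 1 φ)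
    (L : ℝ) (hL : 0 < L) (hlip : LipschitzWith L.toNNReal (gradient φ))
    (uhat yhat y₀ : En n) (k : ℝ) (hk : 0 < k) (b : ℝ) (hb : 0 < b) :
    ∀ ρ > (0 : ℝ), ∃ d : ℝ, 0 < d ∧ d ≤ b ∧ ∃ εstar : ℝ, 0 < εstar ∧ εstar ≤ 1 ∧
      ∀ ε : ℝ, 0 < ε → ε ≤ εstar →
        ∀ yε : ℝ → En n, yε 0 = y₀ →
          (∀ t ∈ Set.Icc (0 : ℝ) b,
            HasDerivWithinAt yε
              (((1 / ε) * φ (uhat + ε • v (t / ε ^ 2))) • v (t / ε ^ 2) - yε t)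
              (Set.Icc (0 : ℝ) b) t) →
        ∀ t ∈ Set.Icc (0 : ℝ) d,
          ‖(-(k * t)) • yhat‖ ^ 2 + ‖yε t - y₀‖ ^ 2 < ρ := by
  intro ρ hρ
  -- bound on v
  obtain ⟨M0, hM0⟩ := isCompact_Icc.exists_bound_of_continuousOn
    (s := Set.Icc (0:ℝ) T) hv.continuousOn
  set M : ℝ := max M0 0 with hMdef
  have hM0' : 0 ≤ M := le_max_right _ _
  have hM : ∀ s : ℝ, ‖v s‖ ≤ M := by
    intro s
    obtain ⟨s', hs', heq⟩ := hper.exists_mem_Ico₀ hT s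
    rw [heq]
    exact le_trans (hM0 s' ⟨hs'.1, hs'.2.le⟩) (le_max_left _ _)
  -- primitive of v
  set V : ℝ → En n := fun τ => ∫ s in (0:ℝ)..τ, v s with hVdef
  have hVint : ∀ a c : ℝ, IntervalIntegrable v MeasureTheory.volume a c :=
    fun a c => hv.intervalIntegrable a c
  have hVper : Function.Periodic V T := by
    intro τ
    have h1 : (∫ s in τ..τ + T, v s) = ∫ s in (0:ℝ)..0 + T, v s :=
      hper.intervalIntegral_add_eq τ 0
    have h2 : V (τ + T) = V τ + ∫ s in τ..τ + T, v s := by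
      rw [hVdef]
      exact (intervalIntegral.integral_add_adjacent_intervals (hVint 0 τ) (hVint τ (τ + T))).symm
    rw [h2, h1]
    simp [hzero]
  have hVbound : ∀ τ : ℝ, ‖V τ‖ ≤ M * T := by
    intro τ
    obtain ⟨s', hs', heq⟩ := hVper.exists_mem_Ico₀ hT τ
    rw [heq]
    calc ‖V s'‖ ≤ M * |s' - 0| := by
          refine intervalIntegral.norm_integral_le_of_norm_le_const ?_
          intro x _; exact hM x
      _ ≤ M * T := by
          rw [sub_zero, abs_of_nonneg hs'.1]
          exact mul_le_mul_of_nonneg_left hs'.2.le hM0'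
  have hVderiv : ∀ τ : ℝ, HasDerivAt V (v τ) τ := fun τ =>
    intervalIntegral.integral_hasDerivAt_right (hVint 0 τ)
      (hv.stronglyMeasurableAtFilter _ _) hv.continuousAt
  have hVcont : Continuous V := by
    rw [continuous_iff_continuousAt]; exact fun τ => (hVderiv τ).continuousAt
  -- gradient / mean value facts
  have hφdiff : Differentiable ℝ φ := hφ.differentiable one_ne_zero
  have hnormfd : ∀ x : En n, ‖fderiv ℝ φ x‖ = ‖gradient φ x‖ := fun x =>
    ((InnerProductSpace.toDual ℝ (En n)).symm.norm_map (fderiv ℝ φ x)).symm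
  have hΔ : ∀ h : En n, |φ (uhat + h) - φ uhat| ≤ (‖gradient φ uhat‖ + L * ‖h‖) * ‖h‖ := by
    intro h
    have hmean := Convex.norm_image_sub_le_of_norm_fderiv_le
      (f := φ) (s := Metric.closedBall uhat ‖h‖) (x := uhat) (y := uhat + h)
      (C := ‖gradient φ uhat‖ + L * ‖h‖)
      (fun x _ => hφdiff.differentiableAt) ?_ (convex_closedBall _ _)
      (Metric.mem_closedBall_self (norm_nonneg _)) ?_
    · simpa [add_sub_cancel_left] using hmean
    · intro x hx
      rw [hnormfd]
      have h1 : ‖gradient φ x - gradient φ uhat‖ ≤ L * ‖x - uhat‖ := by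
        have := hlip.dist_le_mul x uhat
        rw [Real.coe_toNNReal L hL.le] at this
        simpa [dist_eq_norm] using this
      have h2 : ‖x - uhat‖ ≤ ‖h‖ := by
        simpa [dist_eq_norm] using (Metric.mem_closedBall.1 hx)
      calc ‖gradient φ x‖ ≤ ‖gradient φ uhat‖ + ‖gradient φ x - gradient φ uhat‖ := by
            simpa using norm_add_le (gradient φ uhat) (gradient φ x - gradient φ uhat)
        _ ≤ ‖gradient φ uhat‖ + L * ‖h‖ := by
            have := le_trans h1 (mul_le_mul_of_nonneg_left h2 hL.le)
            linarith
    · simp [Metric.mem_closedBall, dist_eq_norm]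
  -- constants
  set C₂ : ℝ := (‖gradient φ uhat‖ + L * M) * M ^ 2 with hC₂def
  set C₀ : ℝ := |φ uhat| * (M * T) with hC₀def
  set B : ℝ := C₂ + ‖y₀‖ + C₀ with hBdef
  set E : ℝ := Real.exp b with hEdef
  have hC₂ : 0 ≤ C₂ := by positivity
  have hC₀ : 0 ≤ C₀ := by positivity
  have hB : 0 ≤ B := by positivity
  have hE : 0 < E := Real.exp_pos b
  set D : ℝ := k * ‖yhat‖ + B * E + C₀ + 1 with hDdef
  have hD : 0 < D := by positivity
  set s : ℝ := Real.sqrt (ρ / 2) with hsdef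
  have hs : 0 < s := Real.sqrt_pos.2 (by linarith)
  set d : ℝ := min b (s / (2 * D)) with hddef
  set εstar : ℝ := min 1 (s / (2 * D)) with hεdef
  have hd0 : 0 < d := lt_min hb (by positivity)
  refine ⟨d, hd0, min_le_left _ _, εstar, lt_min one_pos (by positivity),
    min_le_left _ _, ?_⟩
  intro ε hε hεle yε hy0 hderiv t ht
  have hε1 : ε ≤ 1 := hεle.trans (min_le_left _ _)
  have hεsD : ε ≤ s / (2 * D) := hεle.trans (min_le_right _ _)
  have htb : t ∈ Set.Icc (0:ℝ) b := ⟨ht.1, ht.2.trans (min_le_left _ _)⟩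
  have hεne : ε ≠ 0 := ne_of_gt hε
  -- oscillatory part
  set osc : ℝ → En n := fun t => (ε * φ uhat) • V (t / ε ^ 2) with hoscdef
  have hosc' : ∀ τ : ℝ, HasDerivAt osc (((1 / ε) * φ uhat) • v (τ / ε ^ 2)) τ := by
    intro τ
    have h1 : HasDerivAt (fun x : ℝ => x / ε ^ 2) (1 / ε ^ 2) τ := by
      simpa using (hasDerivAt_id τ).div_const (ε ^ 2)
    have h2 : HasDerivAt (fun x : ℝ => V (x / ε ^ 2)) ((1 / ε ^ 2) • v (τ / ε ^ 2)) τ := by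
      have := HasDerivAt.scomp (x := τ) (h := fun x : ℝ => x / ε ^ 2)
        (hVderiv (τ / ε ^ 2)) h1
      exact this
    have h3 := h2.const_smul (ε * φ uhat)
    refine h3.congr_deriv ?_
    rw [smul_smul]
    congr 1
    field_simp
  have hoscb : ∀ τ : ℝ, ‖osc τ‖ ≤ ε * C₀ := by
    intro τ
    rw [hoscdef]
    simp only [norm_smul, Real.norm_eq_abs, abs_mul, abs_of_pos hε]
    calc ε * |φ uhat| * ‖V (τ / ε ^ 2)‖ ≤ ε * |φ uhat| * (M * T) := by
          refine mul_le_mul_of_nonneg_left (hVbound _) (by positivity)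
      _ = ε * C₀ := by rw [hC₀def]; ring
  have hoscb' : ∀ τ : ℝ, ‖osc τ‖ ≤ C₀ := fun τ =>
    (hoscb τ).trans (by nlinarith [hε1, hC₀])
  -- the corrected function
  set w : ℝ → En n := fun t => yε t - y₀ - osc t with hwdef
  have hw0 : w 0 = 0 := by
    rw [hwdef]; simp [hy0, hoscdef, hVdef]
  set g : ℝ → En n := fun t =>
    ((1 / ε) * (φ (uhat + ε • v (t / ε ^ 2)) - φ uhat)) • v (t / ε ^ 2) - yε t with hgdef
  have hw' : ∀ x ∈ Set.Ico (0:ℝ) b, HasDerivWithinAt w (g x) (Set.Ici x) x := by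
    intro x hx
    have hmem : Set.Icc (0:ℝ) b ∈ nhdsWithin x (Set.Ici x) := Icc_mem_nhdsGE_of_mem hx
    have hy' : HasDerivWithinAt yε
        (((1 / ε) * φ (uhat + ε • v (x / ε ^ 2))) • v (x / ε ^ 2) - yε x) (Set.Ici x) x :=
      (hderiv x ⟨hx.1, hx.2.le⟩).mono_of_mem_nhdsWithin hmem
    have h := (hy'.sub_const y₀).sub ((hosc' x).hasDerivWithinAt)
    refine h.congr_deriv ?_
    rw [hgdef]
    simp only [mul_sub, sub_smul]
    abel
  have hwcont : ContinuousOn w (Set.Icc 0 b) := by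
    have h1 : ContinuousOn yε (Set.Icc 0 b) :=
      fun x hx => (hderiv x hx).continuousWithinAt
    have h2 : Continuous osc := by
      rw [hoscdef]
      fun_prop
    exact (h1.sub continuousOn_const).sub h2.continuousOn
  have hbound : ∀ x ∈ Set.Ico (0:ℝ) b, ‖g x‖ ≤ 1 * ‖w x‖ + B := by
    intro x hx
    have hv1 : ‖v (x / ε ^ 2)‖ ≤ M := hM _
    have hΔ' : (1 / ε) * |φ (uhat + ε • v (x / ε ^ 2)) - φ uhat| ≤
        (‖gradient φ uhat‖ + L * M) * M := by
      have h0 := hΔ (ε • v (x / ε ^ 2))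
      have hnh : ‖ε • v (x / ε ^ 2)‖ = ε * ‖v (x / ε ^ 2)‖ := by
        rw [norm_smul, Real.norm_eq_abs, abs_of_pos hε]
      rw [hnh] at h0
      have hεM : ε * ‖v (x / ε ^ 2)‖ ≤ ε * M :=
        mul_le_mul_of_nonneg_left hv1 hε.le
      have hεinv : 0 < 1 / ε := by positivity
      have key : |φ (uhat + ε • v (x / ε ^ 2)) - φ uhat| ≤
          (‖gradient φ uhat‖ + L * (ε * M)) * (ε * M) := by
        refine h0.trans ?_
        refine mul_le_mul (add_le_add le_rfl (mul_le_mul_of_nonneg_left hεM hL.le))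
          hεM (by positivity) (by positivity)
      calc (1 / ε) * |φ (uhat + ε • v (x / ε ^ 2)) - φ uhat|
          ≤ (1 / ε) * ((‖gradient φ uhat‖ + L * (ε * M)) * (ε * M)) :=
            mul_le_mul_of_nonneg_left key hεinv.le
        _ = (‖gradient φ uhat‖ + L * (ε * M)) * M := by field_simp
        _ ≤ (‖gradient φ uhat‖ + L * M) * M := by
            have hεMM : ε * M ≤ M := by nlinarith
            nlinarith [mul_nonneg (mul_nonneg hL.le hM0') (sub_nonneg.2 hεMM)]
    have hterm : ‖((1 / ε) * (φ (uhat + ε • v (x / ε ^ 2)) - φ uhat)) • v (x / ε ^ 2)‖ ≤ C₂ := by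
      rw [norm_smul, Real.norm_eq_abs, abs_mul, abs_of_pos (by positivity : (0:ℝ) < 1 / ε)]
      calc (1 / ε) * |φ (uhat + ε • v (x / ε ^ 2)) - φ uhat| * ‖v (x / ε ^ 2)‖
          ≤ ((‖gradient φ uhat‖ + L * M) * M) * M := by
            refine mul_le_mul hΔ' hv1 (norm_nonneg _) (by positivity)
        _ = C₂ := by rw [hC₂def]; ring
    have hyx : ‖yε x‖ ≤ ‖w x‖ + ‖y₀‖ + C₀ := by
      have : yε x = w x + y₀ + osc x := by simp only [hwdef]; abel
      rw [this]
      calc ‖w x + y₀ + osc x‖ ≤ ‖w x + y₀‖ + ‖osc x‖ := norm_add_le _ _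
        _ ≤ ‖w x‖ + ‖y₀‖ + ‖osc x‖ := by linarith [norm_add_le (w x) y₀]
        _ ≤ ‖w x‖ + ‖y₀‖ + C₀ := by linarith [hoscb' x]
    calc ‖g x‖ ≤ ‖((1 / ε) * (φ (uhat + ε • v (x / ε ^ 2)) - φ uhat)) • v (x / ε ^ 2)‖ +
          ‖yε x‖ := norm_sub_le _ _
      _ ≤ C₂ + (‖w x‖ + ‖y₀‖ + C₀) := add_le_add hterm hyx
      _ = 1 * ‖w x‖ + B := by rw [hBdef]; ring
  -- Gronwall
  have hgron := norm_le_gronwallBound_of_norm_deriv_right_le (δ := 0) (K := 1) (ε := B)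
    hwcont hw' (by rw [hw0, norm_zero]) hbound t htb
  have hgval : gronwallBound 0 1 B (t - 0) = B * (Real.exp t - 1) := by
    rw [gronwallBound_of_K_ne_0 one_ne_zero]
    simp [sub_zero]
  rw [hgval] at hgron
  have hexpb : Real.exp t - 1 ≤ t * E := by
    have h1 : -t + 1 ≤ Real.exp (-t) := Real.add_one_le_exp (-t)
    have h2 : Real.exp t ≤ E := by rw [hEdef]; exact Real.exp_le_exp.2 htb.2
    have h3 : Real.exp (-t) * Real.exp t = 1 := by
      rw [← Real.exp_add]; simp
    nlinarith [Real.exp_pos t, Real.exp_pos (-t), htb.1]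
  have hwb : ‖w t‖ ≤ s / 2 := by
    have h1 : ‖w t‖ ≤ B * (t * E) :=
      hgron.trans (mul_le_mul_of_nonneg_left hexpb hB)
    have htd : t ≤ s / (2 * D) := ht.2.trans (min_le_right _ _)
    have hBED : B * E ≤ D := by
      rw [hDdef]; linarith [mul_nonneg hk.le (norm_nonneg yhat), hC₀]
    calc ‖w t‖ ≤ B * E * t := by
          have hh : B * (t * E) = B * E * t := by ring
          linarith [h1, hh.le, hh.ge]
      _ ≤ D * (s / (2 * D)) := mul_le_mul hBED htd ht.1 hD.le
      _ = s / 2 := by field_simp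
  have heyb : ‖yε t - y₀‖ ≤ s := by
    have h1 : yε t - y₀ = w t + osc t := by simp only [hwdef]; abel
    have h2 : ε * C₀ ≤ s / 2 := by
      have hCD : C₀ ≤ D := by
        rw [hDdef]
        linarith [mul_nonneg hk.le (norm_nonneg yhat), mul_nonneg hB hE.le]
      calc ε * C₀ ≤ (s / (2 * D)) * D := mul_le_mul hεsD hCD hC₀ (by positivity)
        _ = s / 2 := by field_simp
    calc ‖yε t - y₀‖ = ‖w t + osc t‖ := by rw [h1]
      _ ≤ ‖w t‖ + ‖osc t‖ := norm_add_le _ _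
      _ ≤ s / 2 + ε * C₀ := add_le_add hwb (hoscb t)
      _ ≤ s := by linarith
  have heub : ‖(-(k * t)) • yhat‖ ≤ s / 2 := by
    rw [norm_smul, Real.norm_eq_abs, abs_neg, abs_of_nonneg (mul_nonneg hk.le ht.1)]
    have htd : t ≤ s / (2 * D) := ht.2.trans (min_le_right _ _)
    have hkD : k * ‖yhat‖ ≤ D := by
      rw [hDdef]; linarith [mul_nonneg hB hE.le, hC₀]
    calc k * t * ‖yhat‖ = (k * ‖yhat‖) * t := by ring
      _ ≤ D * (s / (2 * D)) := mul_le_mul hkD htd ht.1 hD.le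
      _ = s / 2 := by field_simp
  have hs2 : s ^ 2 = ρ / 2 := Real.sq_sqrt (by linarith)
  have h1 : ‖(-(k * t)) • yhat‖ ^ 2 ≤ (s / 2) ^ 2 :=
    pow_le_pow_left₀ (norm_nonneg _) heub 2
  have h2 : ‖yε t - y₀‖ ^ 2 ≤ s ^ 2 :=
    pow_le_pow_left₀ (norm_nonneg _) heyb 2
  have h3 : (s / 2) ^ 2 = ρ / 8 := by rw [div_pow, hs2]; ring
  linarith

end
end
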